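/- arXiv:2308.04334 — 5 statements merged into one kernel-verified Lean document; each statement's English description precedes it below -/
import Mathlib

section
/- The map ∂ defined on basis elements e_J (for J ⊆ [d]) by ∂(e_J) = Σ_{j∈J} (-1)^{s(J,j)} C(w(J,j), w'(J,j)) e_{J∖{j}} satisfies ∂∘∂ = 0, i.e., C_•(w_0,...,w_d) is a chain complex. -/
/-!
The arithmetic complex `C_•(w_0,…,w_d)`.

Edges of the path graph are labeled `1,…,d`; edge `i` joins vertices `i-1` and `i`
(vertices are `0,…,d`, with weights `w 0, …, w d`).  A subset `J ⊆ {1,…,d}` cuts the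
path along the edges *not* in `J`, decomposing it into intervals.
-/

/-- The left endpoint (vertex) of the interval containing edge `j` in the decomposition
determined by `J`: the least vertex `v` such that all edges strictly between `v` and `j`
belong to `J`. -/
noncomputable def ivLeft (J : Finset ℕ) (j : ℕ) : ℕ :=
  sInf {v : ℕ | ∀ k ∈ Finset.Ioo v j, k ∈ J}

/-- The right endpoint (vertex) of the interval containing edge `j`. -/
noncomputable def ivRight (d : ℕ) (J : Finset ℕ) (j : ℕ) : ℕ :=
  sSup {v : ℕ | v ≤ d ∧ ∀ k ∈ Finset.Ioc j v, k ∈ J}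

/-- `w(J,j)`: the total weight of the interval containing edge `j`. -/
noncomputable def wtTot (w : ℕ → ℕ) (d : ℕ) (J : Finset ℕ) (j : ℕ) : ℕ :=
  ∑ v ∈ Finset.Icc (ivLeft J j) (ivRight d J j), w v

/-- `w'(J,j)`: the weight of the left subinterval obtained by removing edge `j`. -/
noncomputable def wtL (w : ℕ → ℕ) (J : Finset ℕ) (j : ℕ) : ℕ :=
  ∑ v ∈ Finset.Icc (ivLeft J j) (j - 1), w v

/-- `s(J,j) = #{i : i < j, i ∉ J}`. -/
def sgn (J : Finset ℕ) (j : ℕ) : ℕ :=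
  ((Finset.Ico 1 j).filter (fun i => i ∉ J)).card

/-- The differential of the arithmetic complex `C_•(w_0,…,w_d)`, on the free vector
space with basis `e_J` indexed by subsets `J ⊆ {1,…,d}`:
`∂(e_J) = ∑_{j ∈ J} (-1)^{s(J,j)} C(w(J,j), w'(J,j)) e_{J∖{j}}`. -/
noncomputable def bnd (K : Type*) [Field K] (w : ℕ → ℕ) (d : ℕ) :
    ({J : Finset ℕ // J ⊆ Finset.Icc 1 d} →₀ K) →ₗ[K]
    ({J : Finset ℕ // J ⊆ Finset.Icc 1 d} →₀ K) :=
  Finsupp.lsum K fun J =>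
    LinearMap.toSpanSingleton K _
      (∑ j ∈ J.1, ((-1 : K) ^ sgn J.1 j * ((wtTot w d J.1 j).choose (wtL w J.1 j) : K)) •
        Finsupp.single ⟨J.1.erase j, fun x hx => J.2 (Finset.mem_of_mem_erase hx)⟩ (1 : K))

section API
variable {J : Finset ℕ} {d i j m v : ℕ}

lemma ivLeft_le (h : ∀ k ∈ Finset.Ioo v j, k ∈ J) : ivLeft J j ≤ v := Nat.sInf_le h

lemma ivLeft_spec (J : Finset ℕ) (j : ℕ) : ∀ k ∈ Finset.Ioo (ivLeft J j) j, k ∈ J := by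
  have hne : ({v : ℕ | ∀ k ∈ Finset.Ioo v j, k ∈ J}).Nonempty :=
    ⟨j, by intro k hk; simp only [Finset.mem_Ioo] at hk; omega⟩
  exact Nat.sInf_mem hne

lemma ivLeft_lt (hj : 1 ≤ j) : ivLeft J j < j := by
  have : ivLeft J j ≤ j - 1 := ivLeft_le (by
    intro k hk
    simp only [Finset.mem_Ioo] at hk
    omega)
  omega

lemma ivLeft_not_mem (h1 : 1 ≤ ivLeft J j) : ivLeft J j ∉ J := by
  intro hmem
  have : ivLeft J j ≤ ivLeft J j - 1 := ivLeft_le (by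
    intro k hk
    simp only [Finset.mem_Ioo] at hk
    rcases Nat.eq_or_lt_of_le (by omega : ivLeft J j ≤ k) with h | h
    · exact h ▸ hmem
    · exact ivLeft_spec J j k (by simp only [Finset.mem_Ioo]; omega))
  omega

lemma bddT : BddAbove {v : ℕ | v ≤ d ∧ ∀ k ∈ Finset.Ioc j v, k ∈ J} :=
  ⟨d, fun _ hv => hv.1⟩

lemma le_ivRight (h1 : v ≤ d) (h2 : ∀ k ∈ Finset.Ioc j v, k ∈ J) : v ≤ ivRight d J j :=
  le_csSup bddT ⟨h1, h2⟩

lemma ivRight_spec (hj : j ≤ d) :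
    ivRight d J j ≤ d ∧ ∀ k ∈ Finset.Ioc j (ivRight d J j), k ∈ J := by
  have hne : ({v : ℕ | v ≤ d ∧ ∀ k ∈ Finset.Ioc j v, k ∈ J}).Nonempty :=
    ⟨j, hj, by intro k hk; simp only [Finset.mem_Ioc] at hk; omega⟩
  exact Nat.sSup_mem hne bddT

lemma ivRight_le (hj : j ≤ d) {m : ℕ}
    (h : ∀ u, u ≤ d → (∀ k ∈ Finset.Ioc j u, k ∈ J) → u ≤ m) : ivRight d J j ≤ m := by
  refine csSup_le ⟨j, hj, ?_⟩ (fun u hu => h u hu.1 hu.2)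
  intro k hk; simp only [Finset.mem_Ioc] at hk; omega

lemma le_ivRight_self (hj : j ≤ d) : j ≤ ivRight d J j :=
  le_ivRight hj (by intro k hk; simp only [Finset.mem_Ioc] at hk; omega)

lemma ivLeft_erase_ge (hm : j ≤ m) : ivLeft (J.erase m) j = ivLeft J j := by
  unfold ivLeft
  congr 1
  ext v
  simp only [Set.mem_setOf_eq]
  constructor
  · intro h k hk; exact Finset.mem_of_mem_erase (h k hk)
  · intro h k hk
    refine Finset.mem_erase.2 ⟨?_, h k hk⟩
    simp only [Finset.mem_Ioo] at hk; omega

lemma ivRight_erase_le (hm : m ≤ j) : ivRight d (J.erase m) j = ivRight d J j := by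
  unfold ivRight
  congr 1
  ext v
  simp only [Set.mem_setOf_eq]
  refine and_congr_right fun _ => ?_
  constructor
  · intro h k hk; exact Finset.mem_of_mem_erase (h k hk)
  · intro h k hk
    refine Finset.mem_erase.2 ⟨?_, h k hk⟩
    simp only [Finset.mem_Ioc] at hk; omega

-- Case B (same interval): ivLeft J j < i < j, i ∈ J
lemma ivLeft_same (hiJ : i ∈ J) (hij : i < j) (hLi : ivLeft J j < i) :
    ivLeft J i = ivLeft J j := by
  have hspec := ivLeft_spec J j
  refine le_antisymm (ivLeft_le ?_) ?_
  · intro k hk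
    simp only [Finset.mem_Ioo] at hk
    exact hspec k (by simp only [Finset.mem_Ioo]; omega)
  · refine ivLeft_le ?_
    intro k hk
    simp only [Finset.mem_Ioo] at hk
    rcases lt_trichotomy k i with h | h | h
    · exact ivLeft_spec J i k (by simp only [Finset.mem_Ioo]; omega)
    · exact h ▸ hiJ
    · exact hspec k (by simp only [Finset.mem_Ioo]; omega)

lemma ivRight_same (hjJ : j ∈ J) (hij : i < j) (hLi : ivLeft J j < i)
    (hjd : j ≤ d) : ivRight d J i = ivRight d J j := by
  have hid : i ≤ d := le_of_lt (lt_of_lt_of_le hij hjd)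
  have hL := ivLeft_spec J j
  have hR := (ivRight_spec (J := J) hjd).2
  refine le_antisymm ?_ ?_
  · refine ivRight_le hid (fun u hu hsub => ?_)
    refine le_ivRight hu (fun k hk => ?_)
    simp only [Finset.mem_Ioc] at hk
    exact hsub k (by simp only [Finset.mem_Ioc]; omega)
  · refine le_ivRight (ivRight_spec (J := J) hjd).1 (fun k hk => ?_)
    simp only [Finset.mem_Ioc] at hk
    rcases lt_trichotomy k j with h | h | h
    · exact hL k (by simp only [Finset.mem_Ioo]; omega)
    · exact h ▸ hjJ
    · exact hR k (by simp only [Finset.mem_Ioc]; omega)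

lemma ivLeft_erase_self_lt (hij : i < j) (hLi : ivLeft J j < i) :
    ivLeft (J.erase i) j = i := by
  have hL := ivLeft_spec J j
  refine le_antisymm (ivLeft_le ?_) ?_
  · intro k hk
    simp only [Finset.mem_Ioo] at hk
    exact Finset.mem_erase.2 ⟨by omega, hL k (by simp only [Finset.mem_Ioo]; omega)⟩
  · by_contra hlt
    push_neg at hlt
    have := ivLeft_spec (J.erase i) j i (by simp only [Finset.mem_Ioo]; omega)
    exact absurd (Finset.mem_erase.1 this).1 (by simp)

lemma ivRight_erase_self_gt (hiJ : i ∈ J) (hij : i < j) (hLi : ivLeft J j < i)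
    (hjd : j ≤ d) : ivRight d (J.erase j) i = j - 1 := by
  have hL := ivLeft_spec J j
  refine le_antisymm ?_ ?_
  · refine ivRight_le (by omega) (fun u hu hsub => ?_)
    by_contra hlt
    push_neg at hlt
    have := hsub j (by simp only [Finset.mem_Ioc]; omega)
    exact absurd (Finset.mem_erase.1 this).1 (by simp)
  · refine le_ivRight (by omega) (fun k hk => ?_)
    simp only [Finset.mem_Ioc] at hk
    exact Finset.mem_erase.2 ⟨by omega, hL k (by simp only [Finset.mem_Ioo]; omega)⟩

-- Case A (different intervals): i < ivLeft J j
lemma ivRight_erase_far (hiL : i < ivLeft J j) (hij : i < j) (h1j : 1 ≤ j) :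
    ivRight d (J.erase j) i = ivRight d J i := by
  have hLnot : ivLeft J j ∉ J := ivLeft_not_mem (by omega)
  unfold ivRight
  congr 1
  ext v
  simp only [Set.mem_setOf_eq]
  refine and_congr_right fun _ => ?_
  constructor
  · intro h k hk; exact Finset.mem_of_mem_erase (h k hk)
  · intro h k hk
    simp only [Finset.mem_Ioc] at hk
    refine Finset.mem_erase.2 ⟨?_, h k (by simp only [Finset.mem_Ioc]; omega)⟩
    intro hkj
    have hLj : ivLeft J j < j := ivLeft_lt h1j
    exact hLnot (h (ivLeft J j) (by simp only [Finset.mem_Ioc]; omega))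

lemma ivLeft_erase_far (hiL : i < ivLeft J j) :
    ivLeft (J.erase i) j = ivLeft J j := by
  have hL := ivLeft_spec J j
  refine le_antisymm (ivLeft_le ?_) (Nat.sInf_le ?_)
  · intro k hk
    simp only [Finset.mem_Ioo] at hk
    exact Finset.mem_erase.2 ⟨by omega, hL k (by simp only [Finset.mem_Ioo]; omega)⟩
  · intro k hk
    exact Finset.mem_of_mem_erase (ivLeft_spec (J.erase i) j k hk)

lemma sgn_erase_ge (hm : j ≤ m) : sgn (J.erase m) j = sgn J j := by
  unfold sgn
  congr 1
  apply Finset.filter_congr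
  intro x hx
  simp only [Finset.mem_Ico] at hx
  have hxm : x ≠ m := by omega
  simp [Finset.mem_erase, hxm]

lemma sgn_erase_lt (h1i : 1 ≤ i) (hij : i < j) (hiJ : i ∈ J) :
    sgn (J.erase i) j = sgn J j + 1 := by
  unfold sgn
  have key : (Finset.Ico 1 j).filter (fun x => x ∉ J.erase i)
      = insert i ((Finset.Ico 1 j).filter (fun x => x ∉ J)) := by
    ext x
    simp only [Finset.mem_filter, Finset.mem_insert, Finset.mem_erase, Finset.mem_Ico, not_and]
    constructor
    · rintro ⟨hx, h⟩
      by_cases hxi : x = i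
      · exact Or.inl hxi
      · exact Or.inr ⟨hx, h hxi⟩
    · rintro (rfl | ⟨hx, h⟩)
      · exact ⟨⟨h1i, hij⟩, fun h' => absurd rfl h'⟩
      · exact ⟨hx, fun _ => h⟩
  rw [key, Finset.card_insert_of_notMem (by simp [hiJ])]

end API

lemma binom_key (w : ℕ → ℕ) (d : ℕ) {J : Finset ℕ} (hJ : J ⊆ Finset.Icc 1 d)
    {i j : ℕ} (hiJ : i ∈ J) (hjJ : j ∈ J) (hij : i < j) :
    (wtTot w d J j).choose (wtL w J j) * (wtTot w d (J.erase j) i).choose (wtL w (J.erase j) i)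
      = (wtTot w d J i).choose (wtL w J i) *
        (wtTot w d (J.erase i) j).choose (wtL w (J.erase i) j) := by
  have h1i : 1 ≤ i := (Finset.mem_Icc.1 (hJ hiJ)).1
  have h1j : 1 ≤ j := (Finset.mem_Icc.1 (hJ hjJ)).1
  have hjd : j ≤ d := (Finset.mem_Icc.1 (hJ hjJ)).2
  have hLj : ivLeft J j < j := ivLeft_lt h1j
  rcases lt_or_ge (ivLeft J j) i with hLi | hiL
  · -- same interval
    have eL_i : ivLeft J i = ivLeft J j := ivLeft_same hiJ hij hLi
    have eR_i : ivRight d J i = ivRight d J j := ivRight_same hjJ hij hLi hjd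
    have eL_ji : ivLeft (J.erase j) i = ivLeft J j := by rw [ivLeft_erase_ge hij.le, eL_i]
    have eR_ji : ivRight d (J.erase j) i = j - 1 := ivRight_erase_self_gt hiJ hij hLi hjd
    have eL_ij : ivLeft (J.erase i) j = i := ivLeft_erase_self_lt hij hLi
    have eR_ij : ivRight d (J.erase i) j = ivRight d J j := ivRight_erase_le hij.le
    set L := ivLeft J j with hLdef
    set R := ivRight d J j with hRdef
    have hjR : j ≤ R := le_ivRight_self hjd
    set a := ∑ v ∈ Finset.Ico L i, w v with ha
    set b := ∑ v ∈ Finset.Ico i j, w v with hb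
    set c := ∑ v ∈ Finset.Ico j (R+1), w v with hc
    have hsum : ∀ (p q r : ℕ), p ≤ q → q ≤ r → ∑ v ∈ Finset.Ico p r, w v
        = ∑ v ∈ Finset.Ico p q, w v + ∑ v ∈ Finset.Ico q r, w v :=
      fun p q r h1 h2 => (Finset.sum_Ico_consecutive w h1 h2).symm
    have hIcc : ∀ (p q : ℕ), Finset.Icc p q = Finset.Ico p (q+1) := fun p q =>
      (Finset.Ico_add_one_right_eq_Icc p q).symm
    have hIcc' : ∀ (p q : ℕ), 1 ≤ q → Finset.Icc p (q-1) = Finset.Ico p q := by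
      intro p q h; rw [hIcc]; congr 1; omega
    have e1 : wtTot w d J j = a + b + c := by
      unfold wtTot
      rw [hIcc, hsum L j (R+1) (by omega) (by omega), hsum L i j (by omega) hij.le]
    have e2 : wtL w J j = a + b := by
      unfold wtL
      rw [hIcc' _ _ h1j, hsum L i j (by omega) hij.le]
    have e3 : wtTot w d J i = a + b + c := by
      unfold wtTot
      rw [eL_i, eR_i, hIcc, hsum L j (R+1) (by omega) (by omega),
        hsum L i j (by omega) hij.le]
    have e4 : wtL w J i = a := by unfold wtL; rw [eL_i, hIcc' _ _ h1i]
    have e5 : wtTot w d (J.erase j) i = a + b := by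
      unfold wtTot
      rw [eL_ji, eR_ji, hIcc' _ _ h1j, hsum L i j (by omega) hij.le]
    have e6 : wtL w (J.erase j) i = a := by unfold wtL; rw [eL_ji, hIcc' _ _ h1i]
    have e7 : wtTot w d (J.erase i) j = b + c := by
      unfold wtTot
      rw [eL_ij, eR_ij, hIcc, hsum i j (R+1) hij.le (by omega)]
    have e8 : wtL w (J.erase i) j = b := by unfold wtL; rw [eL_ij, hIcc' _ _ h1j]
    rw [e1, e2, e3, e4, e5, e6, e7, e8]
    have hmul := Nat.choose_mul (n := a+b+c) (k := a+b) (s := a) (by omega)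
    have h2 : a + b + c - a = b + c := by omega
    have h3 : a + b - a = b := by omega
    rw [h2, h3] at hmul
    exact hmul
  · -- different intervals
    have hiL' : i < ivLeft J j := by
      rcases Nat.eq_or_lt_of_le hiL with h | h
      · exact absurd (h ▸ hiJ) (ivLeft_not_mem (by omega))
      · exact h
    have eT1 : wtTot w d (J.erase j) i = wtTot w d J i := by
      unfold wtTot
      rw [ivLeft_erase_ge hij.le, ivRight_erase_far hiL' hij h1j]
    have eW1 : wtL w (J.erase j) i = wtL w J i := by
      unfold wtL; rw [ivLeft_erase_ge hij.le]
    have eT2 : wtTot w d (J.erase i) j = wtTot w d J j := by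
      unfold wtTot
      rw [ivLeft_erase_far hiL', ivRight_erase_le hij.le]
    have eW2 : wtL w (J.erase i) j = wtL w J j := by
      unfold wtL; rw [ivLeft_erase_far hiL']
    rw [eT1, eW1, eT2, eW2, Nat.mul_comm]

lemma coef_cancel (K : Type*) [Field K] (w : ℕ → ℕ) (d : ℕ) {J : Finset ℕ}
    (hJ : J ⊆ Finset.Icc 1 d) {i j : ℕ} (hiJ : i ∈ J) (hjJ : j ∈ J) (hij : i < j) :
    ((-1 : K) ^ sgn J j * ((wtTot w d J j).choose (wtL w J j) : K)) *
      ((-1 : K) ^ sgn (J.erase j) i *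
        ((wtTot w d (J.erase j) i).choose (wtL w (J.erase j) i) : K)) +
    ((-1 : K) ^ sgn J i * ((wtTot w d J i).choose (wtL w J i) : K)) *
      ((-1 : K) ^ sgn (J.erase i) j *
        ((wtTot w d (J.erase i) j).choose (wtL w (J.erase i) j) : K)) = 0 := by
  have h1i : 1 ≤ i := (Finset.mem_Icc.1 (hJ hiJ)).1
  rw [sgn_erase_ge hij.le, sgn_erase_lt h1i hij hiJ]
  have hb := binom_key w d hJ hiJ hjJ hij
  have hb' : ((wtTot w d J j).choose (wtL w J j) : K) *
      ((wtTot w d (J.erase j) i).choose (wtL w (J.erase j) i) : K)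
      = ((wtTot w d J i).choose (wtL w J i) : K) *
        ((wtTot w d (J.erase i) j).choose (wtL w (J.erase i) j) : K) := by
    exact_mod_cast congrArg (Nat.cast : ℕ → K) hb
  rw [pow_succ]
  linear_combination ((-1 : K) ^ sgn J j * (-1 : K) ^ sgn J i) * hb'

lemma single_erase_comm (K : Type*) [Field K] {d : ℕ} {J : Finset ℕ} {i j : ℕ}
    {h1 : (J.erase i).erase j ⊆ Finset.Icc 1 d} {h2 : (J.erase j).erase i ⊆ Finset.Icc 1 d} :
    Finsupp.single (⟨(J.erase i).erase j, h1⟩ : {S : Finset ℕ // S ⊆ Finset.Icc 1 d}) (1 : K)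
      = Finsupp.single ⟨(J.erase j).erase i, h2⟩ 1 := by
  congr 1
  exact Subtype.ext Finset.erase_right_comm

lemma double_sum_cancel {M : Type*} [AddCommGroup M] (s : Finset ℕ) (F : ℕ → ℕ → M)
    (h : ∀ i ∈ s, ∀ j ∈ s, i ≠ j → F i j + F j i = 0) :
    ∑ j ∈ s, ∑ i ∈ s.erase j, F j i = 0 := by
  classical
  have key : ∑ j ∈ s, ∑ i ∈ s.erase j, F j i
      = ∑ p ∈ s ×ˢ s, if p.2 ≠ p.1 then F p.1 p.2 else 0 := by
    rw [Finset.sum_product]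
    refine Finset.sum_congr rfl fun j hj => ?_
    rw [← Finset.sum_filter]
    congr 1
    ext i
    simp only [Finset.mem_erase, Finset.mem_filter]
    tauto
  rw [key]
  refine Finset.sum_involution (fun p _ => (p.2, p.1)) ?_ ?_ ?_ ?_
  · rintro ⟨j, i⟩ hp
    simp only [Finset.mem_product] at hp
    by_cases hij : i = j
    · subst hij; simp
    · rw [if_pos hij, if_pos (Ne.symm hij)]
      exact h j hp.1 i hp.2 (Ne.symm hij)
  · rintro ⟨j, i⟩ hp hf heq
    have : i = j := congrArg Prod.fst heq
    subst this
    simp at hf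
  · rintro ⟨j, i⟩ hp
    simp only [Finset.mem_product] at hp ⊢
    exact ⟨hp.2, hp.1⟩
  · rintro ⟨j, i⟩ hp
    rfl

/-- `∂ ∘ ∂ = 0`, i.e. `C_•(w_0,…,w_d)` is a chain complex. -/
theorem bnd_comp_bnd (K : Type*) [Field K] (w : ℕ → ℕ) (d : ℕ) (hd : 1 ≤ d) :
    (bnd K w d).comp (bnd K w d) = 0 := by
  classical
  apply Finsupp.lhom_ext
  intro J b
  simp only [LinearMap.comp_apply, LinearMap.zero_apply, bnd, Finsupp.lsum_single,
    LinearMap.toSpanSingleton_apply, map_smul, map_sum, one_smul, Finset.smul_sum, smul_smul]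
  refine double_sum_cancel (↑J) _ ?_
  intro i hi j hj hne
  rw [single_erase_comm (K := K)
    (h2 := fun x hx => J.2 (Finset.mem_of_mem_erase (Finset.mem_of_mem_erase hx))), ← add_smul]
  refine smul_eq_zero_of_left ?_ _
  rcases hne.lt_or_gt with hlt | hlt
  · linear_combination (b : K) * coef_cancel K w d J.2 hi hj hlt
  · linear_combination (b : K) * coef_cancel K w d J.2 hj hi hlt
end

section
/- With w_0 = w_1 = w_2 = w_3 = 1, the complex C_• is the four-term complex 0 → k → k³ → k³ → k → 0 with differentials given by matrices [4,6,4]^T, [[-3,2,0],[-3,0,3],[0,-2,3]], and [2,-2,2]; this complex is exact if char(k) = 0 or char(k) ≥ 5, and has nontrivial homology when char(k) = 2 or 3. -/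
open Matrix

/-- for `w_0 = w_1 = w_2 = w_3 = 1`, the complex `C_•` is the four-term
complex `0 → k → k³ → k³ → k → 0` with differentials `[4,6,4]ᵀ`,
`[[-3,2,0],[-3,0,3],[0,-2,3]]` and `[2,-2,2]`.  It is a complex, it is exact when
`char k = 0` or `char k ≥ 5`, and it has nontrivial homology when `char k ∈ {2,3}`. -/
theorem C1111_exactness (K : Type*) [Field K] :
    let d3 : (Fin 1 → K) →ₗ[K] (Fin 3 → K) := Matrix.mulVecLin !![(4 : K); 6; 4]
    let d2 : (Fin 3 → K) →ₗ[K] (Fin 3 → K) :=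
      Matrix.mulVecLin !![(-3 : K), 2, 0; -3, 0, 3; 0, -2, 3]
    let d1 : (Fin 3 → K) →ₗ[K] (Fin 1 → K) := Matrix.mulVecLin !![(2 : K), -2, 2]
    (d2.comp d3 = 0 ∧ d1.comp d2 = 0) ∧
    ((ringChar K = 0 ∨ 5 ≤ ringChar K) →
      (Function.Injective d3 ∧ LinearMap.ker d2 = LinearMap.range d3 ∧
        LinearMap.ker d1 = LinearMap.range d2 ∧ Function.Surjective d1)) ∧
    ((ringChar K = 2 ∨ ringChar K = 3) →
      ¬(Function.Injective d3 ∧ LinearMap.ker d2 = LinearMap.range d3 ∧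
        LinearMap.ker d1 = LinearMap.range d2 ∧ Function.Surjective d1)) := by
  intro d3 d2 d1
  have hd3 : ∀ (x : Fin 1 → K), d3 x = ![4 * x 0, 6 * x 0, 4 * x 0] := by
    intro x
    funext i
    fin_cases i <;>
      simp [d3, Matrix.mulVecLin_apply, Matrix.mulVec, dotProduct, Fin.sum_univ_succ]
  have hd2 : ∀ (x : Fin 3 → K),
      d2 x = ![-3 * x 0 + 2 * x 1, -3 * x 0 + 3 * x 2, -2 * x 1 + 3 * x 2] := by
    intro x
    funext i
    fin_cases i <;>
      simp [d2, Matrix.mulVecLin_apply, Matrix.mulVec, dotProduct, Fin.sum_univ_three] <;> ring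
  have hd1 : ∀ (x : Fin 3 → K), d1 x = ![2 * x 0 - 2 * x 1 + 2 * x 2] := by
    intro x
    funext i
    fin_cases i <;>
      simp [d1, Matrix.mulVecLin_apply, Matrix.mulVec, dotProduct, Fin.sum_univ_three] <;> ring
  refine ⟨⟨?_, ?_⟩, ?_, ?_⟩
  · apply LinearMap.ext
    intro x
    simp only [LinearMap.comp_apply, hd3, hd2, LinearMap.zero_apply]
    funext i
    fin_cases i <;> simp <;> ring
  · apply LinearMap.ext
    intro x
    simp only [LinearMap.comp_apply, hd2, hd1, LinearMap.zero_apply]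
    funext i
    fin_cases i <;> simp <;> ring
  · -- exactness in char 0 or char ≥ 5
    intro h
    have h2 : (2 : K) ≠ 0 := by
      intro h2
      have hdvd : (ringChar K) ∣ 2 :=
        (CharP.cast_eq_zero_iff K (ringChar K) 2).mp (by push_cast; exact h2)
      rcases h with h | h
      · rw [h] at hdvd; exact absurd (zero_dvd_iff.mp hdvd) (by norm_num)
      · have := Nat.le_of_dvd (by norm_num) hdvd; omega
    have h3 : (3 : K) ≠ 0 := by
      intro h3
      have hdvd : (ringChar K) ∣ 3 :=
        (CharP.cast_eq_zero_iff K (ringChar K) 3).mp (by push_cast; exact h3)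
      rcases h with h | h
      · rw [h] at hdvd; exact absurd (zero_dvd_iff.mp hdvd) (by norm_num)
      · have := Nat.le_of_dvd (by norm_num) hdvd; omega
    have h4 : (4 : K) ≠ 0 := by
      have : (4 : K) = 2 * 2 := by norm_num
      rw [this]; exact mul_ne_zero h2 h2
    refine ⟨?_, ?_, ?_, ?_⟩
    · -- injective d3
      intro x y hxy
      have hh := congrFun hxy 0
      rw [hd3 x, hd3 y] at hh
      simp only [Matrix.cons_val_zero] at hh
      funext i
      fin_cases i
      simpa using mul_left_cancel₀ h4 hh
    · -- ker d2 = range d3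
      apply le_antisymm
      · intro v hv
        have hv' : d2 v = 0 := hv
        rw [hd2] at hv'
        have e0 := congrFun hv' 0
        have e1 := congrFun hv' 1
        have e2 := congrFun hv' 2
        simp at e0 e1 e2
        have ha : 4 * (v 0 / 4) = v 0 := by
          rw [mul_div_assoc', div_eq_iff h4]; ring
        refine ⟨fun _ => v 0 / 4, ?_⟩
        rw [hd3]
        funext i
        fin_cases i <;> simp
        · exact ha
        · apply mul_left_cancel₀ h2
          linear_combination (3 : K) * ha - e0
        · apply mul_left_cancel₀ h3
          linear_combination (3 : K) * ha - e1
      · rintro v ⟨c, rfl⟩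
        show d2 (d3 c) = 0
        rw [hd3, hd2]
        funext i
        fin_cases i <;> simp <;> ring
    · -- ker d1 = range d2
      apply le_antisymm
      · intro v hv
        have hv' : d1 v = 0 := hv
        rw [hd1] at hv'
        have e0 := congrFun hv' 0
        simp at e0
        have hb : 2 * (v 0 / 2) = v 0 := by
          rw [mul_div_assoc', div_eq_iff h2]; ring
        have hq : 3 * (v 1 / 3) = v 1 := by
          rw [mul_div_assoc', div_eq_iff h3]; ring
        refine ⟨![0, v 0 / 2, v 1 / 3], ?_⟩
        rw [hd2]
        funext i
        fin_cases i <;> simp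
        · linear_combination hb
        · linear_combination hq
        · apply mul_left_cancel₀ h2
          linear_combination (-2 : K) * hb + (2 : K) * hq - e0
      · rintro v ⟨c, rfl⟩
        show d1 (d2 c) = 0
        rw [hd2, hd1]
        funext i
        fin_cases i
        simp; ring
    · -- surjective d1
      intro y
      have hb : 2 * (y 0 / 2) = y 0 := by
        rw [mul_div_assoc', div_eq_iff h2]; ring
      refine ⟨![y 0 / 2, 0, 0], ?_⟩
      rw [hd1]
      funext i
      fin_cases i
      simp
      linear_combination hb
  · -- nontrivial homology in char 2 or 3
    rintro (h | h) ⟨hinj, hker, _, _⟩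
    · -- char 2 : d3 not injective
      have h2 : (2 : K) = 0 := by
        have : ((2 : ℕ) : K) = 0 := (CharP.cast_eq_zero_iff K (ringChar K) 2).mpr (by rw [h])
        push_cast at this; exact this
      have h4 : (4 : K) = 0 := by linear_combination (2 : K) * h2
      have h6 : (6 : K) = 0 := by linear_combination (3 : K) * h2
      have heq : d3 (fun _ => 1) = d3 0 := by
        rw [hd3, hd3]
        funext i
        fin_cases i <;> simp [h4, h6]
      exact one_ne_zero (congrFun (hinj heq) 0)
    · -- char 3 : ker d2 ≠ range d3
      have h3 : (3 : K) = 0 := by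
        have : ((3 : ℕ) : K) = 0 := (CharP.cast_eq_zero_iff K (ringChar K) 3).mpr (by rw [h])
        push_cast at this; exact this
      have hv : (![1, 0, 0] : Fin 3 → K) ∈ LinearMap.ker d2 := by
        show d2 ![1, 0, 0] = 0
        rw [hd2]
        funext i
        fin_cases i <;> simp [h3]
      rw [hker] at hv
      obtain ⟨c, hc⟩ := hv
      rw [hd3] at hc
      have e0 := congrFun hc 0
      have e2 := congrFun hc 2
      simp at e0 e2
      rcases e2 with h4 | hc0
      · exact one_ne_zero (by linear_combination h4 - h3 : (1 : K) = 0)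
      · rw [hc0] at e0; simp at e0
end

section
/- If p is a prime and p^r > w_1 + ... + w_d, then the complexes C_•(w_0 + p^r, w_1, ..., w_d) and C_•(w_0, w_1, ..., w_d) over a field of characteristic p are isomorphic as chain complexes. -/
/-- Key Lucas-type congruence: if `k < p^r` then `C(n + p^r, k) ≡ C(n, k)` in char `p`. -/
lemma key_choose (K : Type*) [Field K] (p : ℕ) (hp : p.Prime) [CharP K p]
    (r n k : ℕ) (hk : k < p ^ r) : (((n + p ^ r).choose k : ℕ) : K) = (n.choose k : K) := by
  rw [Nat.add_choose_eq]
  push_cast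
  rw [Finset.sum_eq_single (k, 0)]
  · simp
  · rintro ⟨i, j⟩ hij hne
    rw [Finset.HasAntidiagonal.mem_antidiagonal] at hij
    have hj0 : j ≠ 0 := by
      rintro rfl
      exact hne (by simp [← hij])
    have hjp : j ≠ p ^ r := fun h => by omega
    have : p ∣ (p ^ r).choose j := Nat.Prime.dvd_choose_pow hp hj0 hjp
    have : ((p ^ r).choose j : K) = 0 := (CharP.cast_eq_zero_iff K p _).2 this
    rw [this, mul_zero]
  · intro h
    exact absurd (Finset.HasAntidiagonal.mem_antidiagonal.2 (by simp)) h

lemma coeff_eq (K : Type*) [Field K] (p r : ℕ) (hp : p.Prime) [CharP K p]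
    (w : ℕ → ℕ) (d : ℕ) (hr : ∑ i ∈ Finset.Icc 1 d, w i < p ^ r)
    (J : Finset ℕ) (hJ : J ⊆ Finset.Icc 1 d) (j : ℕ) (hj : j ∈ J) :
    (((wtTot (Function.update w 0 (w 0 + p ^ r)) d J j).choose
        (wtL (Function.update w 0 (w 0 + p ^ r)) J j) : ℕ) : K)
      = ((wtTot w d J j).choose (wtL w J j) : K) := by
  have hjd : j ∈ Finset.Icc 1 d := hJ hj
  rw [Finset.mem_Icc] at hjd
  set L := ivLeft J j with hL
  set R := ivRight d J j with hR
  -- basic facts about R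
  have hbdd : BddAbove {v : ℕ | v ≤ d ∧ ∀ k ∈ Finset.Ioc j v, k ∈ J} :=
    ⟨d, fun v hv => hv.1⟩
  have hjR : j ≤ R := le_csSup hbdd ⟨hjd.2, by simp⟩
  have hRd : R ≤ d := csSup_le ⟨j, hjd.2, by simp⟩ (fun v hv => hv.1)
  rcases Nat.eq_zero_or_pos L with hL0 | hL1
  · -- interval starts at vertex 0
    have hsplit : Finset.Icc 0 R = Finset.Icc 0 (j - 1) ∪ Finset.Icc j R := by
      ext x; simp only [Finset.mem_Icc, Finset.mem_union]; omega
    have hdisj : Disjoint (Finset.Icc 0 (j - 1)) (Finset.Icc j R) := by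
      rw [Finset.disjoint_left]
      intro x hx hx'
      rw [Finset.mem_Icc] at hx hx'
      omega
    have htot : ∀ u : ℕ → ℕ, wtTot u d J j = wtL u J j + ∑ v ∈ Finset.Icc j R, u v := by
      intro u
      rw [wtTot, wtL, ← hL, ← hR, hL0, hsplit, Finset.sum_union hdisj]
    set k := ∑ v ∈ Finset.Icc j R, w v with hk
    have hkr : k < p ^ r := by
      refine lt_of_le_of_lt ?_ hr
      exact Finset.sum_le_sum_of_subset (by
        intro x hx
        rw [Finset.mem_Icc] at hx ⊢
        omega)
    -- the updated weight agrees with w on Icc j R (all indices ≥ 1)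
    have hupd : ∀ v ∈ Finset.Icc j R, Function.update w 0 (w 0 + p ^ r) v = w v := by
      intro v hv
      rw [Finset.mem_Icc] at hv
      exact Function.update_of_ne (by omega) _ _
    have hsum_eq : ∑ v ∈ Finset.Icc j R, Function.update w 0 (w 0 + p ^ r) v = k :=
      Finset.sum_congr rfl hupd
    -- wtL of updated = wtL w + p^r
    have h0mem : (0 : ℕ) ∈ Finset.Icc 0 (j - 1) := by simp
    have hwtL : wtL (Function.update w 0 (w 0 + p ^ r)) J j = wtL w J j + p ^ r := by
      rw [wtL, wtL, ← hL, hL0]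
      rw [Finset.sum_update_of_mem h0mem]
      have : ∑ v ∈ Finset.Icc 0 (j - 1), w v
          = w 0 + ∑ v ∈ Finset.Icc 0 (j - 1) \ {0}, w v := by
        rw [Finset.sum_eq_add_sum_sdiff_singleton_of_mem h0mem]
      omega
    have htot' : wtTot (Function.update w 0 (w 0 + p ^ r)) d J j
        = wtL w J j + p ^ r + k := by
      rw [htot, hsum_eq, hwtL]
    rw [htot', htot w, ← hk]
    -- now: C(a + p^r + k, a + p^r) vs C(a + k, a) with k < p^r
    set a := wtL w J j
    have h1 : (a + p ^ r + k).choose (a + p ^ r) = (a + p ^ r + k).choose k := by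
      have := Nat.choose_symm (n := a + p ^ r + k) (k := k) (by omega)
      rw [← this]
      congr 1
      omega
    have h2 : (a + k).choose a = (a + k).choose k := by
      have := Nat.choose_symm (n := a + k) (k := k) (by omega)
      rw [← this]
      congr 1
      omega
    rw [hwtL, h1, h2]
    have : a + p ^ r + k = (a + k) + p ^ r := by omega
    rw [this]
    exact key_choose K p hp r (a + k) k hkr
  · -- interval starts at vertex ≥ 1: weights unchanged
    have htot : wtTot (Function.update w 0 (w 0 + p ^ r)) d J j = wtTot w d J j := by
      refine Finset.sum_congr rfl fun v hv => ?_
      rw [Finset.mem_Icc] at hv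
      exact Function.update_of_ne (by omega) _ _
    have hwtL : wtL (Function.update w 0 (w 0 + p ^ r)) J j = wtL w J j := by
      refine Finset.sum_congr rfl fun v hv => ?_
      rw [Finset.mem_Icc] at hv
      exact Function.update_of_ne (by omega) _ _
    rw [htot, hwtL]

/-- if `p` is prime and `p^r > w_1 + ⋯ + w_d`, then over a field of
characteristic `p` the complexes `C_•(w_0 + p^r, w_1, …, w_d)` and
`C_•(w_0, w_1, …, w_d)` are isomorphic as chain complexes: there is a linear
automorphism commuting with the differentials and preserving the homological
grading (the cardinality of the indexing subsets). -/
theorem lucas_iso_of_complexes (K : Type*) [Field K] (p r : ℕ) (hp : p.Prime)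
    [CharP K p] (w : ℕ → ℕ) (d : ℕ) (hd : 1 ≤ d)
    (hr : ∑ i ∈ Finset.Icc 1 d, w i < p ^ r) :
    ∃ e : ({J : Finset ℕ // J ⊆ Finset.Icc 1 d} →₀ K) ≃ₗ[K]
          ({J : Finset ℕ // J ⊆ Finset.Icc 1 d} →₀ K),
      (∀ x, e (bnd K (Function.update w 0 (w 0 + p ^ r)) d x) = bnd K w d (e x)) ∧
      (∀ J : {J : Finset ℕ // J ⊆ Finset.Icc 1 d},
        ∀ J' ∈ (e (Finsupp.single J (1 : K))).support, J'.1.card = J.1.card) := by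
  have hbnd : bnd K (Function.update w 0 (w 0 + p ^ r)) d = bnd K w d := by
    unfold bnd
    congr 1
    funext J
    congr 1
    refine Finset.sum_congr rfl fun j hj => ?_
    rw [coeff_eq K p r hp w d hr J.1 J.2 j hj]
  refine ⟨LinearEquiv.refl K _, fun x => by simp [hbnd], fun J J' hJ' => ?_⟩
  simp only [LinearEquiv.refl_apply] at hJ'
  rw [Finsupp.support_single_ne_zero _ one_ne_zero, Finset.mem_singleton] at hJ'
  rw [hJ']
end

section
/- The Schur polynomial identity s_{(a,b)} = h_a·h_b − h_{a+1}·h_{b-1} holds in Z[t_1,...,t_n], where s_{(a,b)} = Σ_{T ∈ Tab_n(a,b)} t^T, and furthermore h_a·h_b = Σ_{i=0}^{b} s_{(a+b-i,i)} for a ≥ b (Pieri's rule for two-row shapes). -/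
open MvPolynomial

/-- The `q`-truncated complete homogeneous symmetric polynomial
`h^{(q)}_d = ∑_{i_1+⋯+i_n = d, 0 ≤ i_j < q} t_1^{i_1} ⋯ t_n^{i_n}`. -/
noncomputable def hq (n q d : ℕ) : MvPolynomial (Fin n) ℤ :=
  ∑ c ∈ (Fintype.piFinset fun _ : Fin n => Finset.range q).filter
      (fun c => ∑ i, c i = d), ∏ i, X i ^ c i

/-- The complete homogeneous symmetric polynomial `h_d` in `n` variables. -/
noncomputable def hh (n d : ℕ) : MvPolynomial (Fin n) ℤ := hq n (d + 1) d

/-- `h_d` extended to integer indices by `h_d = 0` for `d < 0`. -/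
noncomputable def hhZ (n : ℕ) (d : ℤ) : MvPolynomial (Fin n) ℤ :=
  if 0 ≤ d then hh n d.toNat else 0

open Classical in
/-- The sum `∑_{T ∈ Tab_n(a,b)} t^T` over semi-standard Young tableaux of shape `(a,b)`
with entries in `{1,…,n}`: a tableau is a pair of rows `u : Fin a → Fin n` (weakly
increasing), `v : Fin b → Fin n` (weakly increasing), with strictly increasing columns
`u_i < v_i`; the monomial `t^T` is the product of the variables of all entries. -/
noncomputable def schurTab (n a b : ℕ) : MvPolynomial (Fin n) ℤ :=
  ∑ T ∈ (Finset.univ : Finset ((Fin a → Fin n) × (Fin b → Fin n))).filter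
      (fun T => Monotone T.1 ∧ Monotone T.2 ∧
        ∀ (i : ℕ) (hb : i < b) (ha : i < a), T.1 ⟨i, ha⟩ < T.2 ⟨i, hb⟩),
    (∏ i, X (T.1 i)) * ∏ j, X (T.2 j)

open Finset in
/-- Finset of monotone tuples. -/
noncomputable def mono (n d : ℕ) : Finset (Fin d → Fin n) :=
  (Finset.univ).filter Monotone

noncomputable def mw {n d : ℕ} (u : Fin d → Fin n) : MvPolynomial (Fin n) ℤ :=
  ∏ i, X (u i)

-- multiset from count vector
def msetOf {n : ℕ} (c : Fin n → ℕ) : Multiset (Fin n) :=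
  (Finset.univ.val).bind fun i => Multiset.replicate (c i) i

lemma count_msetOf {n : ℕ} (c : Fin n → ℕ) (j : Fin n) :
    (msetOf c).count j = c j := by
  classical
  rw [msetOf, Multiset.count_bind]
  rw [show (Multiset.map (fun i => Multiset.count j (Multiset.replicate (c i) i)) Finset.univ.val).sum
      = ∑ i : Fin n, Multiset.count j (Multiset.replicate (c i) i) from rfl]
  rw [Finset.sum_eq_single j]
  · simp [Multiset.count_replicate]
  · intro b _ hb; rw [Multiset.count_replicate, if_neg hb]
  · simp

lemma card_msetOf {n : ℕ} (c : Fin n → ℕ) :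
    Multiset.card (msetOf c) = ∑ i, c i := by
  simp [msetOf, Multiset.card_bind]
  rw [List.sum_ofFn]


noncomputable def tupOf {n : ℕ} (c : Fin n → ℕ) (hc : ∑ i, c i = d) : Fin d → Fin n :=
  fun j => (Multiset.sort (msetOf c) (·≤·)).get
    ⟨j, by rw [Multiset.length_sort, card_msetOf, hc]; exact j.2⟩

lemma ofFn_tupOf {n d : ℕ} (c : Fin n → ℕ) (hc : ∑ i, c i = d) :
    List.ofFn (tupOf c hc) = Multiset.sort (msetOf c) (·≤·) := by
  apply List.ext_get
  · simp [Multiset.length_sort, card_msetOf, hc]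
  · intro i h1 h2; simp [tupOf]

lemma tupOf_monotone {n d : ℕ} (c : Fin n → ℕ) (hc : ∑ i, c i = d) :
    Monotone (tupOf c hc) := by
  rw [← List.sortedLE_ofFn_iff, ofFn_tupOf]
  exact (Multiset.pairwise_sort _ _).sortedLE

def cnt {n d : ℕ} (u : Fin d → Fin n) (i : Fin n) : ℕ :=
  Multiset.count i ↑(List.ofFn u)

lemma sum_cnt {n d : ℕ} (u : Fin d → Fin n) : ∑ i, cnt u i = d := by
  classical
  rw [show ∑ i, cnt u i = ∑ i ∈ (Multiset.ofList (List.ofFn u)).toFinset, cnt u i from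
    (Finset.sum_subset (Finset.subset_univ _) (by
      intro x _ hx; simpa [cnt, Multiset.count_eq_zero, List.count_eq_zero] using hx)).symm]
  simp [cnt, Multiset.toFinset_sum_count_eq]

lemma msetOf_cnt {n d : ℕ} (u : Fin d → Fin n) : msetOf (cnt u) = ↑(List.ofFn u) := by
  ext j
  rw [count_msetOf]; rfl

lemma tupOf_cnt {n d : ℕ} (u : Fin d → Fin n) (hu : Monotone u) (hc : ∑ i, cnt u i = d) :
    tupOf (cnt u) hc = u := by
  have h1 : Multiset.sort (msetOf (cnt u)) (·≤·) = List.ofFn u := by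
    apply List.Perm.eq_of_pairwise' (r := (·≤·))
    · exact Multiset.pairwise_sort _ _
    · exact hu.sortedLE_ofFn.pairwise
    · apply Multiset.coe_eq_coe.mp
      rw [Multiset.sort_eq, msetOf_cnt]
  funext j
  have := ofFn_tupOf (cnt u) hc
  rw [h1] at this
  have := congrArg (fun (l : List (Fin n)) (i : ℕ) => l[i]?) this
  simp only [tupOf] at *
  rw [List.get_of_eq h1]
  simp

lemma cnt_tupOf {n d : ℕ} (c : Fin n → ℕ) (hc : ∑ i, c i = d) : cnt (tupOf c hc) = c := by
  funext i
  rw [cnt, ofFn_tupOf, Multiset.sort_eq, count_msetOf]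

lemma mw_eq_msetProd {n d : ℕ} (u : Fin d → Fin n) :
    mw u = (Multiset.map X ↑(List.ofFn u)).prod := by
  rw [mw, ← List.prod_ofFn, Multiset.map_coe, Multiset.prod_coe, List.map_ofFn]
  rfl

lemma mw_tupOf {n d : ℕ} (c : Fin n → ℕ) (hc : ∑ i, c i = d) :
    mw (tupOf c hc) = ∏ i, X i ^ c i := by
  rw [mw_eq_msetProd, ofFn_tupOf, Multiset.sort_eq, msetOf, Multiset.map_bind,
    Multiset.prod_bind]
  simp only [Multiset.map_replicate, Multiset.prod_replicate]
  rfl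

lemma hh_eq_sum_mono (n d : ℕ) : hh n d = ∑ u ∈ mono n d, mw u := by
  classical
  rw [hh, hq]
  refine Finset.sum_bij' (fun c hc => tupOf c (Finset.mem_filter.mp hc).2)
    (fun u _ => cnt u) ?_ ?_ ?_ ?_ ?_
  · intro c hc
    exact Finset.mem_filter.mpr ⟨Finset.mem_univ _, tupOf_monotone _ _⟩
  · intro u hu
    refine Finset.mem_filter.mpr ⟨?_, sum_cnt u⟩
    refine Fintype.mem_piFinset.mpr fun i => Finset.mem_range.mpr ?_
    show Multiset.count i (↑(List.ofFn u) : Multiset (Fin n)) < d + 1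
    have h1 : Multiset.count i (↑(List.ofFn u) : Multiset (Fin n)) ≤ Multiset.card (↑(List.ofFn u) : Multiset (Fin n)) := Multiset.count_le_card _ _
    have h2 : Multiset.card (↑(List.ofFn u) : Multiset (Fin n)) = d := by
      rw [Multiset.coe_card, List.length_ofFn]
    omega
  · intro c hc; exact cnt_tupOf _ _
  · intro u hu; exact tupOf_cnt u (Finset.mem_filter.mp hu).2 _
  · intro c hc; exact (mw_tupOf _ _).symm

/-- Monotonicity from consecutive steps. -/
lemma monotone_step {d n : ℕ} {f : Fin d → Fin n}
    (h : ∀ j : ℕ, (hj : j + 1 < d) → f ⟨j, by omega⟩ ≤ f ⟨j + 1, hj⟩) : Monotone f := by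
  have key : ∀ (m i : ℕ) (h1 : i + m < d), f ⟨i, by omega⟩ ≤ f ⟨i + m, h1⟩ := by
    intro m
    induction m with
    | zero => intro i h1; exact le_of_eq rfl
    | succ m ih =>
      intro i h1
      exact le_trans (ih i (by omega)) (by
        have := h (i + m) (by omega)
        simpa [Nat.add_assoc] using this)
  intro x y hxy
  have hx : (⟨(x : ℕ), x.isLt⟩ : Fin d) = x := rfl
  have h2 : ((x : ℕ)) + ((y : ℕ) - (x : ℕ)) < d := by have := y.isLt; omega
  have := key ((y : ℕ) - (x : ℕ)) (x : ℕ) h2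
  have hy : (⟨(x : ℕ) + ((y : ℕ) - (x : ℕ)), h2⟩ : Fin d) = y := by
    apply Fin.ext; simp; omega
  rwa [hy] at this

section KeyB

variable {n a b : ℕ}

/-- Violation at column `i`. -/
def Q (u : Fin a → Fin n) (v : Fin b → Fin n) (i : ℕ) : Prop :=
  ∃ (h1 : i < b) (h2 : i < a), v ⟨i, h1⟩ ≤ u ⟨i, h2⟩

noncomputable def kOf (u : Fin a → Fin n) (v : Fin b → Fin n) (hex : ∃ i, Q u v i) : ℕ :=
  @Nat.find _ (Classical.decPred _) hex

lemma kOf_spec (u : Fin a → Fin n) (v : Fin b → Fin n) (hex : ∃ i, Q u v i) :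
    Q u v (kOf u v hex) := @Nat.find_spec _ (Classical.decPred _) hex

lemma kOf_min (u : Fin a → Fin n) (v : Fin b → Fin n) (hex : ∃ i, Q u v i) :
    ∀ j < kOf u v hex, ¬ Q u v j := fun j hj => @Nat.find_min _ (Classical.decPred _) hex j hj

def RR (u' : Fin (a+1) → Fin n) (v' : Fin (b-1) → Fin n) (j : ℕ) : Prop :=
  j = b - 1 ∨ ∃ (h1 : j < b-1) (h2 : j < a+1), u' ⟨j, h2⟩ ≤ v' ⟨j, h1⟩

noncomputable def kOf' (u' : Fin (a+1) → Fin n) (v' : Fin (b-1) → Fin n) : ℕ :=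
  @Nat.find (RR u' v') (Classical.decPred _) ⟨b-1, Or.inl rfl⟩

lemma kOf'_spec (u' : Fin (a+1) → Fin n) (v' : Fin (b-1) → Fin n) :
    RR u' v' (kOf' u' v') := @Nat.find_spec _ (Classical.decPred _) _

lemma kOf'_min (u' : Fin (a+1) → Fin n) (v' : Fin (b-1) → Fin n) :
    ∀ j < kOf' u' v', ¬ RR u' v' j := fun j hj => @Nat.find_min _ (Classical.decPred _) _ j hj

lemma kOf'_le (u' : Fin (a+1) → Fin n) (v' : Fin (b-1) → Fin n) : kOf' u' v' ≤ b - 1 :=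
  @Nat.find_le _ _ (Classical.decPred _) _ (Or.inl rfl)

lemma kOf_eq_iff (u : Fin a → Fin n) (v : Fin b → Fin n) (hex : ∃ i, Q u v i) (m : ℕ) :
    kOf u v hex = m ↔ Q u v m ∧ ∀ j < m, ¬ Q u v j :=
  @Nat.find_eq_iff _ _ (Classical.decPred _) _

lemma kOf'_eq_iff (u' : Fin (a+1) → Fin n) (v' : Fin (b-1) → Fin n) (m : ℕ) :
    kOf' u' v' = m ↔ RR u' v' m ∧ ∀ j < m, ¬ RR u' v' j :=
  @Nat.find_eq_iff _ _ (Classical.decPred _) _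

def fwd1 (u : Fin a → Fin n) (v : Fin b → Fin n) (k : ℕ) (hk : k < b) : Fin (a+1) → Fin n :=
  fun j => if h : (j : ℕ) ≤ k then v ⟨j, by omega⟩
    else u ⟨(j : ℕ) - 1, by have := j.isLt; omega⟩

def fwd2 (u : Fin a → Fin n) (v : Fin b → Fin n) (k : ℕ) (hba : b ≤ a) : Fin (b-1) → Fin n :=
  fun j => if h : (j : ℕ) < k then u ⟨j, by have := j.isLt; omega⟩
    else v ⟨(j : ℕ) + 1, by have := j.isLt; omega⟩

def bwd1 (u' : Fin (a+1) → Fin n) (v' : Fin (b-1) → Fin n) (k' : ℕ) (hk' : k' ≤ b - 1)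
    (hba : b ≤ a) : Fin a → Fin n :=
  fun j => if h : (j : ℕ) < k' then v' ⟨j, by omega⟩
    else u' ⟨(j : ℕ) + 1, by have := j.isLt; omega⟩

def bwd2 (u' : Fin (a+1) → Fin n) (v' : Fin (b-1) → Fin n) (k' : ℕ) (hk' : k' ≤ b - 1)
    (hba : b ≤ a) : Fin b → Fin n :=
  fun j => if h : (j : ℕ) ≤ k' then u' ⟨j, by have := j.isLt; omega⟩
    else v' ⟨(j : ℕ) - 1, by have := j.isLt; omega⟩

lemma mono_mk {d : ℕ} {f : Fin d → Fin n} (hf : Monotone f) {i j : ℕ} (hi : i < d)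
    (hj : j < d) (hij : i ≤ j) : f ⟨i, hi⟩ ≤ f ⟨j, hj⟩ := hf (Fin.mk_le_mk.mpr hij)

lemma app_mk_eq {d : ℕ} {f : Fin d → Fin n} {i j : ℕ} (hi : i < d) (hj : j < d)
    (hij : i = j) : f ⟨i, hi⟩ = f ⟨j, hj⟩ := congrArg f (Fin.ext hij)

variable {u : Fin a → Fin n} {v : Fin b → Fin n} {k : ℕ}

lemma fwd1_mono (hu : Monotone u) (hv : Monotone v) (hk : k < b) (hba : b ≤ a)
    (hQ : ∀ (h1 : k < b) (h2 : k < a), v ⟨k, h1⟩ ≤ u ⟨k, h2⟩) :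
    Monotone (fwd1 u v k hk) := by
  apply monotone_step
  intro j hj
  simp only [fwd1]
  split_ifs with h1 h2 h2
  · exact mono_mk hv _ _ (by omega)
  · -- j = k, goal v ⟨j⟩ ≤ u ⟨j+1-1⟩
    have hjk : j = k := by omega
    calc v ⟨j, by omega⟩ = v ⟨k, hk⟩ := app_mk_eq _ _ hjk
    _ ≤ u ⟨k, by omega⟩ := hQ _ _
    _ = u ⟨j + 1 - 1, by omega⟩ := app_mk_eq _ _ (by omega)
  · omega
  · exact mono_mk hu _ _ (by omega)

lemma fwd2_mono (hu : Monotone u) (hv : Monotone v) (hk : k < b) (hba : b ≤ a)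
    (hmin : ∀ j, j < k → ∀ (h1 : j < b) (h2 : j < a), u ⟨j, h2⟩ < v ⟨j, h1⟩) :
    Monotone (fwd2 u v k hba) := by
  apply monotone_step
  intro j hj
  simp only [fwd2]
  split_ifs with h1 h2 h2
  · exact mono_mk hu _ _ (by omega)
  · -- j+1 = k : u ⟨j⟩ ≤ v ⟨j+1+1⟩
    calc u ⟨j, by omega⟩ ≤ v ⟨j, by omega⟩ := le_of_lt (hmin j (by omega) _ _)
    _ ≤ v ⟨j + 1 + 1, by omega⟩ := mono_mk hv _ _ (by omega)
  · omega
  · exact mono_mk hv _ _ (by omega)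

variable {u' : Fin (a+1) → Fin n} {v' : Fin (b-1) → Fin n}

lemma bwd1_mono (hu' : Monotone u') (hv' : Monotone v') (hk' : kOf' u' v' ≤ b - 1)
    (hba : b ≤ a) : Monotone (bwd1 u' v' (kOf' u' v') hk' hba) := by
  apply monotone_step
  intro j hj
  simp only [bwd1]
  split_ifs with h1 h2 h2
  · exact mono_mk hv' _ _ (by omega)
  · -- j+1 = k' : v' ⟨j⟩ ≤ u' ⟨j+1+1⟩
    have hmin := kOf'_min u' v' j (by omega)
    simp only [RR] at hmin
    push_neg at hmin
    obtain ⟨hne, hlt⟩ := hmin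
    have := hlt (by omega) (by omega)
    calc v' ⟨j, by omega⟩ ≤ u' ⟨j, by omega⟩ := le_of_lt this
    _ ≤ u' ⟨j + 1 + 1, by omega⟩ := mono_mk hu' _ _ (by omega)
  · omega
  · exact mono_mk hu' _ _ (by omega)

lemma bwd2_mono (hu' : Monotone u') (hv' : Monotone v') (hk' : kOf' u' v' ≤ b - 1)
    (hba : b ≤ a) (hb1 : 1 ≤ b) : Monotone (bwd2 u' v' (kOf' u' v') hk' hba) := by
  apply monotone_step
  intro j hj
  simp only [bwd2]
  split_ifs with h1 h2 h2
  · exact mono_mk hu' _ _ (by omega)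
  · -- j = k', j+1 > k' : u' ⟨k'⟩ ≤ v' ⟨j+1-1⟩ = v' ⟨k'⟩, need k' < b-1
    have hjk : j = kOf' u' v' := by omega
    have hklt : kOf' u' v' < b - 1 := by omega
    have hspec := kOf'_spec u' v'
    simp only [RR] at hspec
    rcases hspec with h | ⟨hh1, hh2, hle⟩
    · omega
    · calc u' ⟨j, by omega⟩ = u' ⟨kOf' u' v', hh2⟩ := app_mk_eq _ _ hjk
      _ ≤ v' ⟨kOf' u' v', hh1⟩ := hle
      _ = v' ⟨j + 1 - 1, by omega⟩ := app_mk_eq _ _ (by omega)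
  · omega
  · exact mono_mk hv' _ _ (by omega)

lemma mw_eq_listProd {d : ℕ} (w : Fin d → Fin n) :
    mw w = ((List.ofFn w).map X).prod := by
  rw [mw_eq_msetProd, Multiset.map_coe, Multiset.prod_coe]

lemma ofFn_fwd1 (hk : k < b) (hba : b ≤ a) :
    List.ofFn (fwd1 u v k hk) = (List.ofFn v).take (k+1) ++ (List.ofFn u).drop k := by
  apply List.ext_getElem
  · simp only [List.length_ofFn, List.length_append, List.length_take, List.length_drop,
      min_eq_left (by omega : k + 1 ≤ b)]
    omega
  · intro i h1 h2
    rw [List.getElem_ofFn]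
    simp only [fwd1]
    have hlt : ((List.ofFn v).take (k+1)).length = k+1 := by
      simp only [List.length_take, List.length_ofFn]
      exact min_eq_left (by omega)
    split_ifs with h
    · rw [List.getElem_append_left (by omega), List.getElem_take, List.getElem_ofFn]
    · rw [List.getElem_append_right (by omega), List.getElem_drop, List.getElem_ofFn]
      exact app_mk_eq _ _ (by simp only [List.length_ofFn] at *; omega)

lemma ofFn_fwd2 (hk : k < b) (hba : b ≤ a) :
    List.ofFn (fwd2 u v k hba) = (List.ofFn u).take k ++ (List.ofFn v).drop (k+1) := by
  apply List.ext_getElem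
  · simp only [List.length_ofFn, List.length_append, List.length_take, List.length_drop,
      min_eq_left (by omega : k ≤ a)]
    omega
  · intro i h1 h2
    rw [List.getElem_ofFn]
    simp only [fwd2]
    have hlt : ((List.ofFn u).take k).length = k := by
      simp only [List.length_take, List.length_ofFn]
      exact min_eq_left (by omega)
    split_ifs with h
    · rw [List.getElem_append_left (by omega), List.getElem_take, List.getElem_ofFn]
    · rw [List.getElem_append_right (by omega), List.getElem_drop, List.getElem_ofFn]
      exact app_mk_eq _ _ (by simp only [List.length_ofFn] at *; omega)

lemma mw_fwd (hk : k < b) (hba : b ≤ a) :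
    mw (fwd1 u v k hk) * mw (fwd2 u v k hba) = mw u * mw v := by
  rw [mw_eq_listProd (fwd1 u v k hk), mw_eq_listProd (fwd2 u v k hba), ofFn_fwd1 hk hba,
    ofFn_fwd2 hk hba, mw_eq_listProd u, mw_eq_listProd v]
  conv_rhs => rw [← List.take_append_drop k (List.ofFn u),
    ← List.take_append_drop (k+1) (List.ofFn v)]
  simp only [List.map_append, List.prod_append]
  ring

lemma bwd_fwd1 (hk : k < b) (hba : b ≤ a) (hkb : k ≤ b - 1) :
    bwd1 (fwd1 u v k hk) (fwd2 u v k hba) k hkb hba = u := by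
  funext j
  simp only [bwd1, fwd1, fwd2]
  split_ifs <;> first | rfl | omega | exact app_mk_eq _ _ (by omega)

lemma bwd_fwd2 (hk : k < b) (hba : b ≤ a) (hkb : k ≤ b - 1) :
    bwd2 (fwd1 u v k hk) (fwd2 u v k hba) k hkb hba = v := by
  funext j
  simp only [bwd2, fwd1, fwd2]
  split_ifs <;> first | rfl | omega | exact app_mk_eq _ _ (by omega)

variable {u' : Fin (a+1) → Fin n} {v' : Fin (b-1) → Fin n}

lemma fwd_bwd1 (hk : k < b) (hba : b ≤ a) (hkb : k ≤ b - 1) :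
    fwd1 (bwd1 u' v' k hkb hba) (bwd2 u' v' k hkb hba) k hk = u' := by
  funext j
  simp only [bwd1, fwd1, bwd2]
  split_ifs <;> first | rfl | omega | exact app_mk_eq _ _ (by omega)

lemma fwd_bwd2 (hk : k < b) (hba : b ≤ a) (hkb : k ≤ b - 1) :
    fwd2 (bwd1 u' v' k hkb hba) (bwd2 u' v' k hkb hba) k hba = v' := by
  funext j
  simp only [bwd1, fwd2, bwd2]
  split_ifs <;> first | rfl | omega | exact app_mk_eq _ _ (by omega)

lemma bwd1_congr {k1 k2 : ℕ} (h : k1 = k2) (h1 : k1 ≤ b - 1) (h2 : k2 ≤ b - 1)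
    (hba : b ≤ a) : bwd1 u' v' k1 h1 hba = bwd1 u' v' k2 h2 hba := by subst h; rfl

lemma bwd2_congr {k1 k2 : ℕ} (h : k1 = k2) (h1 : k1 ≤ b - 1) (h2 : k2 ≤ b - 1)
    (hba : b ≤ a) : bwd2 u' v' k1 h1 hba = bwd2 u' v' k2 h2 hba := by subst h; rfl

/-- the first `RR`-index of the forward image is `k`. -/
lemma kOf'_fwd (hv : Monotone v) (hk : k < b) (hba : b ≤ a)
    (hmin : ∀ j, j < k → ∀ (h1 : j < b) (h2 : j < a), u ⟨j, h2⟩ < v ⟨j, h1⟩) :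
    kOf' (fwd1 u v k hk) (fwd2 u v k hba) = k := by
  rw [kOf'_eq_iff]
  constructor
  · by_cases hkb : k = b - 1
    · exact Or.inl hkb
    · refine Or.inr ⟨by omega, by omega, ?_⟩
      show (if h : (k : ℕ) ≤ k then _ else _) ≤ (if h : (k : ℕ) < k then _ else _)
      rw [dif_pos (le_refl k), dif_neg (lt_irrefl k)]
      exact mono_mk hv _ _ (by omega)
  · intro j hj
    simp only [RR]
    push_neg
    refine ⟨by omega, fun h1 h2 => ?_⟩
    show (if h : (j : ℕ) < k then _ else _) < (if h : (j : ℕ) ≤ k then _ else _)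
    rw [dif_pos (by omega : (j:ℕ) < k), dif_pos (by omega : (j:ℕ) ≤ k)]
    exact hmin j hj _ _

/-- the first `Q`-violation of the backward image is `kOf'`. -/
lemma kOf_bwd (hu' : Monotone u') (hb1 : 1 ≤ b) (hba : b ≤ a)
    (hex : ∃ i, Q (bwd1 u' v' (kOf' u' v') (kOf'_le u' v') hba)
      (bwd2 u' v' (kOf' u' v') (kOf'_le u' v') hba) i) :
    kOf _ _ hex = kOf' u' v' := by
  rw [kOf_eq_iff]
  have hkb := kOf'_le u' v'
  constructor
  · refine ⟨by omega, by omega, ?_⟩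
    show (if h : (kOf' u' v' : ℕ) ≤ kOf' u' v' then _ else _)
      ≤ (if h : (kOf' u' v' : ℕ) < kOf' u' v' then _ else _)
    rw [dif_pos (le_refl _), dif_neg (lt_irrefl _)]
    exact mono_mk hu' _ _ (by omega)
  · intro j hj
    simp only [Q]
    push_neg
    intro h1 h2
    have hmin := kOf'_min u' v' j hj
    simp only [RR] at hmin
    push_neg at hmin
    obtain ⟨hne, hlt⟩ := hmin
    have := hlt (by omega) (by omega)
    show (if h : (j : ℕ) < kOf' u' v' then _ else _) < (if h : (j : ℕ) ≤ kOf' u' v' then _ else _)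
    rw [dif_pos hj, dif_pos (le_of_lt hj)]
    exact this

lemma kOf_lt_b (u : Fin a → Fin n) (v : Fin b → Fin n) (hex : ∃ i, Q u v i) :
    kOf u v hex < b := by
  obtain ⟨h1, h2, h⟩ := kOf_spec u v hex; exact h1

lemma fwd1_congr {k1 k2 : ℕ} (h : k1 = k2) (h1 : k1 < b) (h2 : k2 < b) :
    fwd1 u v k1 h1 = fwd1 u v k2 h2 := by subst h; rfl

lemma fwd2_congr {k1 k2 : ℕ} (h : k1 = k2) (hba : b ≤ a) :
    fwd2 u v k1 hba = fwd2 u v k2 hba := by subst h; rfl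

end KeyB

open Classical in
lemma schurTab_eq (n a b : ℕ) (hba : b ≤ a) :
    schurTab n a b =
      ∑ p ∈ (mono n a ×ˢ mono n b).filter (fun p => ¬ ∃ i, Q p.1 p.2 i),
        mw p.1 * mw p.2 := by
  classical
  rw [schurTab]
  apply Finset.sum_congr
  · ext p
    simp only [Finset.mem_filter, Finset.mem_univ, true_and, Finset.mem_product, mono]
    constructor
    · rintro ⟨h1, h2, h3⟩
      refine ⟨⟨h1, h2⟩, ?_⟩
      rintro ⟨i, hb, ha, hle⟩
      exact absurd (h3 i hb ha) (not_lt.mpr hle)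
    · rintro ⟨⟨h1, h2⟩, h3⟩
      refine ⟨h1, h2, ?_⟩
      intro i hb ha
      by_contra hc
      exact h3 ⟨i, hb, ha, not_lt.mp hc⟩
  · intro p _; rfl

lemma key_identity (n a b : ℕ) (hb1 : 1 ≤ b) (hba : b ≤ a) :
    hh n a * hh n b = schurTab n a b + hh n (a+1) * hh n (b-1) := by
  classical
  rw [hh_eq_sum_mono n a, hh_eq_sum_mono n b, hh_eq_sum_mono n (a+1), hh_eq_sum_mono n (b-1),
    Finset.sum_mul_sum, schurTab_eq n a b hba, Finset.sum_mul_sum]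
  rw [← Finset.sum_product' (s := mono n a) (t := mono n b) (f := fun u v => mw u * mw v)]
  rw [← Finset.sum_product' (s := mono n (a+1)) (t := mono n (b-1))
    (f := fun u v => mw u * mw v)]
  rw [← Finset.sum_filter_add_sum_filter_not (mono n a ×ˢ mono n b)
    (fun p => ∃ i, Q p.1 p.2 i) (fun p => mw p.1 * mw p.2)]
  rw [add_comm]
  congr 1
  refine Finset.sum_bij'
    (fun p hp => (fwd1 p.1 p.2 (kOf p.1 p.2 (by
        have := (Finset.mem_filter.mp hp).2; simpa using this))
        (kOf_lt_b _ _ _),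
      fwd2 p.1 p.2 (kOf p.1 p.2 (by
        have := (Finset.mem_filter.mp hp).2; simpa using this)) hba))
    (fun q hq => (bwd1 q.1 q.2 (kOf' q.1 q.2) (kOf'_le _ _) hba,
      bwd2 q.1 q.2 (kOf' q.1 q.2) (kOf'_le _ _) hba))
    ?_ ?_ ?_ ?_ ?_
  · -- forward membership
    intro p hp
    obtain ⟨hmem, hviol⟩ := Finset.mem_filter.mp hp
    obtain ⟨hu, hv⟩ := Finset.mem_product.mp hmem
    have hu' := (Finset.mem_filter.mp hu).2
    have hv' := (Finset.mem_filter.mp hv).2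
    refine Finset.mem_product.mpr ⟨Finset.mem_filter.mpr ⟨Finset.mem_univ _, ?_⟩,
      Finset.mem_filter.mpr ⟨Finset.mem_univ _, ?_⟩⟩
    · apply fwd1_mono hu' hv' (kOf_lt_b _ _ _) hba
      intro h1 h2
      obtain ⟨hh1, hh2, hle⟩ := kOf_spec p.1 p.2 _
      exact le_trans (le_of_eq (app_mk_eq _ _ rfl)) (le_trans hle (le_of_eq (app_mk_eq _ _ rfl)))
    · apply fwd2_mono hu' hv' (kOf_lt_b _ _ _) hba
      intro j hj h1 h2
      have := kOf_min p.1 p.2 _ j hj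
      simp only [Q] at this
      push_neg at this
      exact this h1 h2
  · -- backward membership
    intro q hq
    obtain ⟨hu, hv⟩ := Finset.mem_product.mp hq
    have hu' := (Finset.mem_filter.mp hu).2
    have hv' := (Finset.mem_filter.mp hv).2
    refine Finset.mem_filter.mpr ⟨Finset.mem_product.mpr
      ⟨Finset.mem_filter.mpr ⟨Finset.mem_univ _, bwd1_mono hu' hv' (kOf'_le _ _) hba⟩,
       Finset.mem_filter.mpr ⟨Finset.mem_univ _, bwd2_mono hu' hv' (kOf'_le _ _) hba hb1⟩⟩, ?_⟩
    simp only [not_not]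
    refine ⟨kOf' q.1 q.2, ?_, ?_, ?_⟩
    · have := kOf'_le q.1 q.2; omega
    · have := kOf'_le q.1 q.2; omega
    · show (if h : (kOf' q.1 q.2 : ℕ) ≤ kOf' q.1 q.2 then _ else _)
        ≤ (if h : (kOf' q.1 q.2 : ℕ) < kOf' q.1 q.2 then _ else _)
      rw [dif_pos (le_refl _), dif_neg (lt_irrefl _)]
      exact mono_mk hu' _ _ (by omega)
  · -- left inverse
    intro p hp
    obtain ⟨hmem, hviol⟩ := Finset.mem_filter.mp hp
    obtain ⟨hu, hv⟩ := Finset.mem_product.mp hmem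
    have hu' := (Finset.mem_filter.mp hu).2
    have hv' := (Finset.mem_filter.mp hv).2
    have hex : ∃ i, Q p.1 p.2 i := by simpa using hviol
    have hmin : ∀ j, j < kOf p.1 p.2 hex → ∀ (h1 : j < b) (h2 : j < a),
        p.1 ⟨j, h2⟩ < p.2 ⟨j, h1⟩ := by
      intro j hj h1 h2
      have := kOf_min p.1 p.2 hex j hj
      simp only [Q] at this
      push_neg at this
      exact this h1 h2
    have hke : kOf' (fwd1 p.1 p.2 (kOf p.1 p.2 hex) (kOf_lt_b _ _ _))
        (fwd2 p.1 p.2 (kOf p.1 p.2 hex) hba) = kOf p.1 p.2 hex :=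
      kOf'_fwd hv' (kOf_lt_b _ _ _) hba hmin
    have hkb : kOf p.1 p.2 hex ≤ b - 1 := by have := kOf_lt_b p.1 p.2 hex; omega
    dsimp only
    refine Prod.ext ?_ ?_
    · rw [bwd1_congr hke (kOf'_le _ _) hkb hba]
      exact bwd_fwd1 (kOf_lt_b _ _ _) hba hkb
    · rw [bwd2_congr hke (kOf'_le _ _) hkb hba]
      exact bwd_fwd2 (kOf_lt_b _ _ _) hba hkb
  · -- right inverse
    intro q hq
    obtain ⟨hu, hv⟩ := Finset.mem_product.mp hq
    have hu' := (Finset.mem_filter.mp hu).2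
    have hex : ∃ i, Q (bwd1 q.1 q.2 (kOf' q.1 q.2) (kOf'_le _ _) hba)
        (bwd2 q.1 q.2 (kOf' q.1 q.2) (kOf'_le _ _) hba) i := by
      refine ⟨kOf' q.1 q.2, ?_, ?_, ?_⟩
      · have := kOf'_le q.1 q.2; omega
      · have := kOf'_le q.1 q.2; omega
      · show (if h : (kOf' q.1 q.2 : ℕ) ≤ kOf' q.1 q.2 then _ else _)
          ≤ (if h : (kOf' q.1 q.2 : ℕ) < kOf' q.1 q.2 then _ else _)
        rw [dif_pos (le_refl _), dif_neg (lt_irrefl _)]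
        exact mono_mk hu' _ _ (by omega)
    have hke : kOf _ _ hex = kOf' q.1 q.2 := kOf_bwd hu' hb1 hba hex
    have hkb : kOf' q.1 q.2 ≤ b - 1 := kOf'_le _ _
    have hkltb : kOf' q.1 q.2 < b := by omega
    dsimp only
    refine Prod.ext ?_ ?_
    · rw [fwd1_congr hke (kOf_lt_b _ _ _) hkltb]
      exact fwd_bwd1 hkltb hba hkb
    · rw [fwd2_congr hke hba]
      exact fwd_bwd2 hkltb hba hkb
  · -- weights
    intro p hp
    exact (mw_fwd (kOf_lt_b _ _ _) hba).symm

lemma hh_zero (n : ℕ) : hh n 0 = 1 := by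
  classical
  rw [hh_eq_sum_mono]
  have : mono n 0 = Finset.univ := by
    ext f
    simp [mono, Subsingleton.monotone f]
  rw [this]
  have h2 : ∀ f : Fin 0 → Fin n, mw f = 1 := by intro f; simp [mw]
  rw [Finset.sum_congr rfl (fun f _ => h2 f), Finset.sum_const, Finset.card_univ]
  simp

lemma hhZ_coe (n d : ℕ) : hhZ n (d : ℤ) = hh n d := by
  rw [hhZ, if_pos (by positivity)]
  simp

lemma hhZ_neg_one (n : ℕ) : hhZ n (-1) = 0 := by
  rw [hhZ, if_neg (by omega)]

open Classical in
lemma keyC (n a b : ℕ) (hba : b ≤ a) :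
    schurTab n a b = hh n a * hh n b - hh n (a + 1) * hhZ n ((b : ℤ) - 1) := by
  rcases Nat.eq_zero_or_pos b with hb | hb
  · subst hb
    rw [show ((0:ℕ) : ℤ) - 1 = -1 by ring, hhZ_neg_one, mul_zero, sub_zero]
    -- schurTab n a 0 = hh n a * hh n 0
    rw [schurTab_eq n a 0 (by omega), hh_eq_sum_mono n a, hh_eq_sum_mono n 0,
      Finset.sum_mul_sum,
      ← Finset.sum_product' (s := mono n a) (t := mono n 0) (f := fun u v => mw u * mw v)]
    apply Finset.sum_congr _ (fun _ _ => rfl)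
    rw [Finset.filter_true_of_mem]
    rintro p - ⟨i, hi1, -, -⟩
    omega
  · have h1 : ((b : ℤ) - 1) = ((b - 1 : ℕ) : ℤ) := by omega
    rw [h1, hhZ_coe, key_identity n a b hb hba]
    ring

lemma pieri (n a b : ℕ) (hba : b ≤ a) :
    hh n a * hh n b = ∑ i ∈ Finset.range (b + 1), schurTab n (a + b - i) i := by
  have step : ∀ i ∈ Finset.range (b + 1), schurTab n (a + b - i) i =
      (fun i => hh n (a + b + 1 - i) * hhZ n ((i : ℤ) - 1)) (i + 1)
      - (fun i => hh n (a + b + 1 - i) * hhZ n ((i : ℤ) - 1)) i := by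
    intro i hi
    rw [Finset.mem_range] at hi
    rw [keyC n (a + b - i) i (by omega)]
    dsimp only
    have e1 : a + b + 1 - (i + 1) = a + b - i := by omega
    have e2 : a + b - i + 1 = a + b + 1 - i := by omega
    have e3 : ((i + 1 : ℕ) : ℤ) - 1 = (i : ℤ) := by push_cast; ring
    rw [e1, e2, e3, hhZ_coe]
  rw [Finset.sum_congr rfl step, Finset.sum_range_sub
    (fun i => hh n (a + b + 1 - i) * hhZ n ((i : ℤ) - 1))]
  have e4 : a + b + 1 - (b + 1) = a := by omega
  have e5 : ((b + 1 : ℕ) : ℤ) - 1 = (b : ℤ) := by push_cast; ring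
  have e6 : ((0 : ℕ) : ℤ) - 1 = -1 := by ring
  rw [e4, e5, e6, hhZ_coe, hhZ_neg_one, mul_zero, sub_zero]

/-- `s_{(a,b)} = ∑_{T ∈ Tab_n(a,b)} t^T` satisfies
`s_{(a,b)} = h_a h_b − h_{a+1} h_{b-1}`, and Pieri's rule for two-row shapes:
`h_a·h_b = ∑_{i=0}^{b} s_{(a+b-i,i)}` for `a ≥ b`. -/
theorem schur_two_row_identities (n a b : ℕ) (hab : b ≤ a) :
    schurTab n a b = hh n a * hh n b - hh n (a + 1) * hhZ n ((b : ℤ) - 1) ∧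
    hh n a * hh n b = ∑ i ∈ Finset.range (b + 1), schurTab n (a + b - i) i :=
  ⟨keyC n a b hab, pieri n a b hab⟩
end

section
/- Let R = k[x_1,...,x_n,y_1,...,y_n], I the ideal of 2×2 minors x_i y_j − x_j y_i of the generic 2×n matrix, and for a semi-standard tableau T of shape (a,b) (a ≥ b) define G_T = (Π_{i=1}^{b} (x_{u_i} y_{v_i} − x_{v_i} y_{u_i})) · x_{u_{b+1}}···x_{u_a}. Then the leading term of G_T with respect to the graded lexicographic order with x_1 > ... > x_n > y_1 > ... > y_n is the monomial M_T = x_{u_1}···x_{u_a}·y_{v_1}···y_{v_b}. Consequently, the polynomials {G_T : T ∈ Tab_n(a,b)} are linearly independent over k. -/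
open MvPolynomial

/-- Variables of `R = k[x_1,…,x_n,y_1,…,y_n]`: `Sum.inl i` is `x_{i+1}`,
`Sum.inr j` is `y_{j+1}`. -/
abbrev Vars (n : ℕ) := Fin n ⊕ Fin n

/-- The rank of a variable in the order `x_1 > x_2 > ⋯ > x_n > y_1 > ⋯ > y_n`:
smaller rank means a more important (larger) variable. -/
def varRank {n : ℕ} : Vars n → ℕ := Sum.elim (fun i => (i : ℕ)) (fun j => n + (j : ℕ))

/-- Graded lexicographic comparison of exponent vectors: `c < c'` iff `c` has smaller
total degree, or equal total degree and, at the most important variable where they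
differ, `c` has the smaller exponent. -/
def GrlexLT {n : ℕ} (c c' : Vars n →₀ ℕ) : Prop :=
  (c.sum fun _ e => e) < (c'.sum fun _ e => e) ∨
  ((c.sum fun _ e => e) = (c'.sum fun _ e => e) ∧
    ∃ v : Vars n, c v < c' v ∧ ∀ w : Vars n, varRank w < varRank v → c w = c' w)

/-- Semi-standard tableaux of shape `(a,b)` (with `b ≤ a`): rows `u, v` weakly
increasing, columns strictly increasing. -/
def IsSSYT {n a b : ℕ} (hba : b ≤ a) (u : Fin a → Fin n) (v : Fin b → Fin n) : Prop :=
  Monotone u ∧ Monotone v ∧ ∀ i : Fin b, u (Fin.castLE hba i) < v i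

/-- `G_T = (∏_{i=1}^{b} (x_{u_i} y_{v_i} − x_{v_i} y_{u_i})) · x_{u_{b+1}} ⋯ x_{u_a}`. -/
noncomputable def GT {n a b : ℕ} (K : Type*) [Field K] (hba : b ≤ a)
    (u : Fin a → Fin n) (v : Fin b → Fin n) : MvPolynomial (Vars n) K :=
  (∏ i : Fin b,
    (X (Sum.inl (u (Fin.castLE hba i))) * X (Sum.inr (v i)) -
     X (Sum.inl (v i)) * X (Sum.inr (u (Fin.castLE hba i))))) *
  ∏ i ∈ Finset.univ.filter (fun i : Fin a => b ≤ (i : ℕ)), X (Sum.inl (u i))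

/-- The exponent vector of the monomial `M_T = x_{u_1} ⋯ x_{u_a} · y_{v_1} ⋯ y_{v_b}`. -/
noncomputable def MT {n a b : ℕ} (u : Fin a → Fin n) (v : Fin b → Fin n) : Vars n →₀ ℕ :=
  (∑ i : Fin a, Finsupp.single (Sum.inl (u i)) 1) +
  ∑ j : Fin b, Finsupp.single (Sum.inr (v j)) 1

-- Auxiliary definitions and lemmas
noncomputable def degHom (n : ℕ) : (Vars n →₀ ℕ) →+ ℕ where
  toFun c := c.sum fun _ e => e
  map_zero' := Finsupp.sum_zero_index
  map_add' f g := by exact Finsupp.sum_add_index' (h := fun _ e => e) (fun _ => rfl) (fun _ _ _ => rfl)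

lemma degHom_apply {n : ℕ} (c : Vars n →₀ ℕ) : degHom n c = c.sum fun _ e => e := rfl

@[simp] lemma degHom_single {n : ℕ} (w : Vars n) (k : ℕ) :
    degHom n (Finsupp.single w k) = k := by
  rw [degHom_apply]; exact Finsupp.sum_single_index rfl

noncomputable def psi {n : ℕ} (c : Vars n →₀ ℕ) : ℕ ×ₗ Lex (Fin (n + n) →₀ ℕ) :=
  toLex (degHom n c, toLex (c.equivMapDomain finSumFinEquiv))

lemma varRank_eq {n : ℕ} (w : Vars n) : varRank w = (finSumFinEquiv w : ℕ) := by
  cases w <;> simp [varRank, Nat.add_comm]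

lemma psi_lt_of_grlexLT {n : ℕ} {c c' : Vars n →₀ ℕ} (h : GrlexLT c c') : psi c < psi c' := by
  rcases h with h | ⟨hdeg, v, hv, hw⟩
  · refine (Prod.Lex.lt_iff).2 (Or.inl ?_)
    show degHom n c < degHom n c'
    rw [degHom_apply, degHom_apply]; exact h
  · refine (Prod.Lex.lt_iff).2 (Or.inr ⟨?_, ?_⟩)
    · show degHom n c = degHom n c'
      rw [degHom_apply, degHom_apply]; exact hdeg
    rw [Finsupp.Lex.lt_iff]
    refine ⟨finSumFinEquiv v, fun j hj => ?_, ?_⟩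
    · show (c.equivMapDomain finSumFinEquiv) j = (c'.equivMapDomain finSumFinEquiv) j
      rw [Finsupp.equivMapDomain_apply, Finsupp.equivMapDomain_apply]
      apply hw
      rw [varRank_eq, varRank_eq, Equiv.apply_symm_apply]
      exact hj
    · show (c.equivMapDomain finSumFinEquiv) _ < (c'.equivMapDomain finSumFinEquiv) _
      rw [Finsupp.equivMapDomain_apply, Finsupp.equivMapDomain_apply, Equiv.symm_apply_apply]
      exact hv

lemma not_grlexLT_self {n : ℕ} (c : Vars n →₀ ℕ) : ¬ GrlexLT c c := by
  rintro (h | ⟨-, v, hv, -⟩)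
  · exact lt_irrefl _ h
  · exact lt_irrefl _ hv

lemma prod_monomial {K : Type*} [CommSemiring K] {σ ι : Type*} (s : Finset ι)
    (d : ι → (σ →₀ ℕ)) (c : ι → K) :
    ∏ i ∈ s, (monomial (d i) (c i)) = monomial (∑ i ∈ s, d i) (∏ i ∈ s, c i) := by
  classical
  induction s using Finset.induction_on with
  | empty => simp [MvPolynomial.monomial_zero']
  | insert _ _ ha ih =>
    rw [Finset.prod_insert ha, Finset.sum_insert ha, Finset.prod_insert ha, ih, monomial_mul]

lemma sum_fin_split {M : Type*} [AddCommMonoid M] {a b : ℕ} (hba : b ≤ a) (g : Fin a → M) :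
    ∑ i : Fin a, g i = (∑ i : Fin b, g (Fin.castLE hba i)) +
      ∑ i ∈ Finset.univ.filter (fun i : Fin a => b ≤ (i : ℕ)), g i := by
  classical
  rw [← Finset.sum_filter_add_sum_filter_not Finset.univ (fun i : Fin a => (i : ℕ) < b)]
  congr 1
  · refine (Finset.sum_bij' (fun (i : Fin a) (hi : i ∈ Finset.univ.filter fun i : Fin a => (i : ℕ) < b) =>
      (⟨(i : ℕ), (Finset.mem_filter.1 hi).2⟩ : Fin b))
      (fun (i : Fin b) _ => Fin.castLE hba i) ?_ ?_ ?_ ?_ ?_)  <;> intros <;>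
      simp_all [Fin.ext_iff]
  · apply Finset.sum_congr _ (fun _ _ => rfl)
    ext i; simp [not_lt]

noncomputable def alphaE {n a b : ℕ} (hba : b ≤ a) (u : Fin a → Fin n) (v : Fin b → Fin n)
    (i : Fin b) : Vars n →₀ ℕ :=
  Finsupp.single (Sum.inl (u (Fin.castLE hba i))) 1 + Finsupp.single (Sum.inr (v i)) 1

noncomputable def betaE {n a b : ℕ} (hba : b ≤ a) (u : Fin a → Fin n) (v : Fin b → Fin n)
    (i : Fin b) : Vars n →₀ ℕ :=
  Finsupp.single (Sum.inl (v i)) 1 + Finsupp.single (Sum.inr (u (Fin.castLE hba i))) 1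

noncomputable def muE {n a : ℕ} (b : ℕ) (u : Fin a → Fin n) : Vars n →₀ ℕ :=
  ∑ i ∈ Finset.univ.filter (fun i : Fin a => b ≤ (i : ℕ)), Finsupp.single (Sum.inl (u i)) 1

noncomputable def EE {n a b : ℕ} (hba : b ≤ a) (u : Fin a → Fin n) (v : Fin b → Fin n)
    (t : Finset (Fin b)) : Vars n →₀ ℕ :=
  (∑ i ∈ t, alphaE hba u v i) + (∑ i ∈ Finset.univ \ t, betaE hba u v i) + muE b u

lemma GT_eq {n a b : ℕ} (K : Type*) [Field K] (hba : b ≤ a)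
    (u : Fin a → Fin n) (v : Fin b → Fin n) :
    GT K hba u v = ∑ t ∈ (Finset.univ : Finset (Fin b)).powerset,
      monomial (EE hba u v t) ((-1 : K) ^ (Finset.univ \ t).card) := by
  classical
  have hX : ∀ s : Vars n, (X s : MvPolynomial (Vars n) K) = monomial (Finsupp.single s 1) 1 :=
    fun _ => rfl
  have h1 : ∀ i : Fin b, ((X (Sum.inl (u (Fin.castLE hba i))) * X (Sum.inr (v i)) -
      X (Sum.inl (v i)) * X (Sum.inr (u (Fin.castLE hba i)))) : MvPolynomial (Vars n) K)
      = monomial (alphaE hba u v i) 1 + monomial (betaE hba u v i) (-1) := by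
    intro i
    rw [hX, hX, hX, hX, monomial_mul, monomial_mul, one_mul, sub_eq_add_neg, alphaE, betaE]
    congr 1
    exact (map_neg (monomial _) 1).symm
  rw [GT]
  simp only [h1]
  rw [Finset.prod_add, Finset.sum_mul]
  refine Finset.sum_congr rfl fun t ht => ?_
  have h2 : ∏ i ∈ Finset.univ.filter (fun i : Fin a => b ≤ (i : ℕ)),
      (X (Sum.inl (u i)) : MvPolynomial (Vars n) K) = monomial (muE b u) 1 := by
    simp only [hX]
    rw [prod_monomial, Finset.prod_const_one, muE]
  rw [prod_monomial, prod_monomial, h2, monomial_mul, monomial_mul, Finset.prod_const_one,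
    Finset.prod_const, one_mul, mul_one, EE]

lemma EE_univ {n a b : ℕ} (hba : b ≤ a) (u : Fin a → Fin n) (v : Fin b → Fin n) :
    EE hba u v Finset.univ = MT u v := by
  classical
  rw [EE, Finset.sdiff_self, Finset.sum_empty, add_zero]
  unfold alphaE muE MT
  rw [Finset.sum_add_distrib, sum_fin_split hba (fun i => Finsupp.single (Sum.inl (u i)) (1 : ℕ))]
  abel

lemma MT_apply_inl {n a b : ℕ} (u : Fin a → Fin n) (v : Fin b → Fin n) (w : Fin n) :
    MT u v (Sum.inl w) = ∑ i : Fin a, (if u i = w then (1:ℕ) else 0) := by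
  rw [MT, Finsupp.add_apply, Finsupp.finset_sum_apply, Finsupp.finset_sum_apply]
  simp [Finsupp.single_apply]

lemma MT_apply_inr {n a b : ℕ} (u : Fin a → Fin n) (v : Fin b → Fin n) (w : Fin n) :
    MT u v (Sum.inr w) = ∑ j : Fin b, (if v j = w then (1:ℕ) else 0) := by
  rw [MT, Finsupp.add_apply, Finsupp.finset_sum_apply, Finsupp.finset_sum_apply]
  simp [Finsupp.single_apply]

lemma EE_apply_inl {n a b : ℕ} (hba : b ≤ a) (u : Fin a → Fin n) (v : Fin b → Fin n)
    (t : Finset (Fin b)) (w : Fin n) :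
    EE hba u v t (Sum.inl w) = (∑ i ∈ t, if u (Fin.castLE hba i) = w then (1:ℕ) else 0)
      + (∑ i ∈ Finset.univ \ t, if v i = w then (1:ℕ) else 0)
      + ∑ i ∈ Finset.univ.filter (fun i : Fin a => b ≤ (i : ℕ)), (if u i = w then (1:ℕ) else 0) := by
  rw [EE, Finsupp.add_apply, Finsupp.add_apply, Finsupp.finset_sum_apply,
    Finsupp.finset_sum_apply]
  simp [alphaE, betaE, muE, Finsupp.add_apply, Finsupp.finset_sum_apply, Finsupp.single_apply]

lemma degHom_EE {n a b : ℕ} (hba : b ≤ a) (u : Fin a → Fin n) (v : Fin b → Fin n)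
    (t : Finset (Fin b)) :
    degHom n (EE hba u v t) = 2 * b + degHom n (muE b u) := by
  classical
  have ha : ∀ i : Fin b, degHom n (alphaE hba u v i) = 2 := fun i => by
    rw [alphaE, map_add, degHom_single, degHom_single]
  have hb : ∀ i : Fin b, degHom n (betaE hba u v i) = 2 := fun i => by
    rw [betaE, map_add, degHom_single, degHom_single]
  rw [EE, map_add, map_add, map_sum, map_sum]
  rw [Finset.sum_congr rfl fun i _ => ha i, Finset.sum_congr rfl fun i _ => hb i,
    Finset.sum_const, Finset.sum_const, smul_eq_mul, smul_eq_mul]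
  have h1 : (Finset.univ \ t).card = b - t.card := by
    rw [Finset.card_sdiff_of_subset (Finset.subset_univ t), Finset.card_univ, Fintype.card_fin]
  have h2 : t.card ≤ b := by
    have := Finset.card_le_card (Finset.subset_univ t)
    rwa [Finset.card_univ, Fintype.card_fin] at this
  omega

lemma EE_lt {n a b : ℕ} (hba : b ≤ a) (u : Fin a → Fin n) (v : Fin b → Fin n)
    (hcol : ∀ i : Fin b, u (Fin.castLE hba i) < v i)
    (t : Finset (Fin b)) (ht : t ≠ Finset.univ) :
    GrlexLT (EE hba u v t) (MT u v) := by
  classical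
  have hs : (Finset.univ \ t).Nonempty :=
    Finset.sdiff_nonempty.2 fun hsub => ht (Finset.univ_subset_iff.1 hsub).symm.symm
  set s : Finset (Fin b) := Finset.univ \ t with hs_def
  have him : (s.image fun i => u (Fin.castLE hba i)).Nonempty := hs.image _
  set j := (s.image fun i => u (Fin.castLE hba i)).min' him with hj_def
  obtain ⟨i0, hi0s, hi0⟩ := Finset.mem_image.1 ((s.image fun i => u (Fin.castLE hba i)).min'_mem him)
  have hj_le : ∀ i ∈ s, (j : ℕ) ≤ (u (Fin.castLE hba i) : ℕ) := fun i hi =>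
    Fin.le_def.1 (Finset.min'_le _ _ (Finset.mem_image_of_mem _ hi))
  have hj_lt_v : ∀ i ∈ s, (j : ℕ) < (v i : ℕ) := fun i hi =>
    lt_of_le_of_lt (hj_le i hi) (Fin.lt_def.1 (hcol i))
  refine Or.inr ⟨?_, Sum.inl j, ?_, ?_⟩
  · show degHom n (EE hba u v t) = degHom n (MT u v)
    rw [degHom_EE, ← EE_univ hba u v, degHom_EE]
  · rw [EE_apply_inl, MT_apply_inl, sum_fin_split hba (fun i => if u i = j then (1:ℕ) else 0),
      ← Finset.sum_sdiff (Finset.subset_univ t), ← hs_def]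
    have hz : ∑ i ∈ s, (if v i = j then (1:ℕ) else 0) = 0 :=
      Finset.sum_eq_zero fun i hi => if_neg (fun h => by
        have := hj_lt_v i hi; rw [h] at this; omega)
    have hpos : 1 ≤ ∑ i ∈ s, (if u (Fin.castLE hba i) = j then (1:ℕ) else 0) := by
      refine le_trans ?_ (Finset.single_le_sum
        (f := fun i => if u (Fin.castLE hba i) = j then (1:ℕ) else 0)
        (fun _ _ => Nat.zero_le _) hi0s)
      rw [← hj_def] at hi0
      simp [hi0]
    rw [hz]
    omega
  · rintro (w | w) hw
    · have hwj : (w : ℕ) < (j : ℕ) := hw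
      rw [EE_apply_inl, MT_apply_inl, sum_fin_split hba (fun i => if u i = w then (1:ℕ) else 0),
        ← Finset.sum_sdiff (Finset.subset_univ t), ← hs_def]
      have h1 : ∑ i ∈ s, (if v i = w then (1:ℕ) else 0) = 0 :=
        Finset.sum_eq_zero fun i hi => if_neg (fun h => by
          have h2 := hj_lt_v i hi
          have h3 := congrArg Fin.val h
          omega)
      have h2 : ∑ i ∈ s, (if u (Fin.castLE hba i) = w then (1:ℕ) else 0) = 0 :=
        Finset.sum_eq_zero fun i hi => if_neg (fun h => by
          have h2 := hj_le i hi
          have h3 := congrArg Fin.val h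
          omega)
      rw [h1, h2]
      omega
    · exfalso
      have hwj : n + (w : ℕ) < (j : ℕ) := hw
      have := j.isLt
      omega


lemma part1 {n a b : ℕ} (K : Type*) [Field K] (hba : b ≤ a)
    (u : Fin a → Fin n) (v : Fin b → Fin n)
    (hcol : ∀ i : Fin b, u (Fin.castLE hba i) < v i) :
    MvPolynomial.coeff (MT u v) (GT K hba u v) = 1 ∧
      ∀ c ∈ (GT K hba u v).support, c ≠ MT u v → GrlexLT c (MT u v) := by
  classical
  constructor
  · rw [GT_eq, coeff_sum]
    rw [Finset.sum_eq_single Finset.univ]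
    · rw [EE_univ, coeff_monomial, if_pos rfl, Finset.sdiff_self, Finset.card_empty, pow_zero]
    · intro t _ hne
      rw [coeff_monomial, if_neg]
      intro h
      exact not_grlexLT_self (MT u v) (h ▸ EE_lt hba u v hcol t hne)
    · intro h
      exact absurd (Finset.mem_powerset_self _) h
  · intro c hc hne
    rw [mem_support_iff, GT_eq, coeff_sum] at hc
    obtain ⟨t, _, htne⟩ := Finset.exists_ne_zero_of_sum_ne_zero hc
    have hEt : EE hba u v t = c := by
      by_contra h
      rw [coeff_monomial, if_neg h] at htne
      exact htne rfl
    have htuniv : t ≠ Finset.univ := fun h => hne (by rw [← hEt, h, EE_univ])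
    exact hEt ▸ EE_lt hba u v hcol t htuniv

lemma monotone_eq_of_cnt {a n : ℕ} {u u' : Fin a → Fin n} (hu : Monotone u) (hu' : Monotone u')
    (h : ∀ w : Fin n, (∑ i : Fin a, if u i = w then (1:ℕ) else 0)
      = ∑ i : Fin a, if u' i = w then (1:ℕ) else 0) :
    u = u' := by
  classical
  have key : ∀ (f : Fin a → Fin n) (w : Fin n),
      Multiset.count w (Multiset.map f Finset.univ.val)
        = ∑ i : Fin a, if f i = w then (1:ℕ) else 0 := by
    intro f w
    rw [Multiset.count_map, Finset.sum_boole, Nat.cast_id]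
    rw [Finset.card_def, Finset.filter_val]
    congr 1
    exact Multiset.filter_congr fun x _ => eq_comm
  have hms : Multiset.map u Finset.univ.val = Multiset.map u' Finset.univ.val := by
    ext w
    rw [key, key, h w]
  rw [Fin.univ_val_map, Fin.univ_val_map] at hms
  have hperm : (List.ofFn u).Perm (List.ofFn u') := Multiset.coe_eq_coe.1 hms
  have hsort : List.Pairwise (· ≤ ·) (List.ofFn u) :=
    List.pairwise_ofFn.2 fun i j hij => hu hij.le
  have hsort' : List.Pairwise (· ≤ ·) (List.ofFn u') :=
    List.pairwise_ofFn.2 fun i j hij => hu' hij.le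
  have heq := List.Perm.eq_of_pairwise' hsort hsort' hperm
  exact List.ofFn_injective heq

lemma MT_inj {n a b : ℕ} (hba : b ≤ a) {u u' : Fin a → Fin n} {v v' : Fin b → Fin n}
    (hu : Monotone u) (hu' : Monotone u') (hv : Monotone v) (hv' : Monotone v')
    (h : MT u v = MT u' v') : u = u' ∧ v = v' := by
  constructor
  · refine monotone_eq_of_cnt hu hu' fun w => ?_
    rw [← MT_apply_inl u v w, ← MT_apply_inl u' v' w, h]
  · refine monotone_eq_of_cnt hv hv' fun w => ?_
    rw [← MT_apply_inr u v w, ← MT_apply_inr u' v' w, h]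

/-- for every semi-standard tableau `T` of shape `(a,b)`, the leading
term of `G_T` with respect to the graded lexicographic order with
`x_1 > ⋯ > x_n > y_1 > ⋯ > y_n` is the monomial `M_T` (with coefficient `1`), and
consequently the family `{G_T : T ∈ Tab_n(a,b)}` is linearly independent over `K`. -/
theorem GT_leading_term_and_linearIndependent (K : Type*) [Field K] (n a b : ℕ)
    (hba : b ≤ a) :
    (∀ (u : Fin a → Fin n) (v : Fin b → Fin n), IsSSYT hba u v →
      MvPolynomial.coeff (MT u v) (GT K hba u v) = 1 ∧
      ∀ c ∈ (GT K hba u v).support, c ≠ MT u v → GrlexLT c (MT u v)) ∧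
    LinearIndependent K
      (fun T : {T : (Fin a → Fin n) × (Fin b → Fin n) // IsSSYT hba T.1 T.2} =>
        GT K hba T.1.1 T.1.2) := by
  classical
  refine ⟨fun u v hT => part1 K hba u v hT.2.2, ?_⟩
  rw [linearIndependent_iff]
  intro l hl
  by_contra hl0
  have hsupp : l.support.Nonempty := Finsupp.support_nonempty_iff.2 hl0
  obtain ⟨T0, hT0mem, hT0max⟩ :=
    Finset.exists_max_image l.support (fun T => psi (MT T.1.1 T.1.2)) hsupp
  have hcoeff : MvPolynomial.coeff (MT T0.1.1 T0.1.2)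
      ((Finsupp.linearCombination K
        (fun T : {T : (Fin a → Fin n) × (Fin b → Fin n) // IsSSYT hba T.1 T.2} =>
          GT K hba T.1.1 T.1.2)) l) = l T0 := by
    rw [Finsupp.linearCombination_apply, Finsupp.sum, MvPolynomial.coeff_sum]
    rw [Finset.sum_eq_single T0]
    · rw [MvPolynomial.coeff_smul, (part1 K hba T0.1.1 T0.1.2 T0.2.2.2).1, smul_eq_mul, mul_one]
    · intro T hT hTne
      rw [MvPolynomial.coeff_smul]
      have hz : MvPolynomial.coeff (MT T0.1.1 T0.1.2) (GT K hba T.1.1 T.1.2) = 0 := by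
        by_contra hnz
        have hmem : MT T0.1.1 T0.1.2 ∈ (GT K hba T.1.1 T.1.2).support :=
          MvPolynomial.mem_support_iff.2 hnz
        by_cases heq : MT T0.1.1 T0.1.2 = MT T.1.1 T.1.2
        · obtain ⟨h1, h2⟩ := MT_inj hba T0.2.1 T.2.1 T0.2.2.1 T.2.2.1 heq
          apply hTne
          apply Subtype.ext
          exact Prod.ext h1.symm h2.symm
        · have hgl := (part1 K hba T.1.1 T.1.2 T.2.2.2).2 _ hmem heq
          have hlt := psi_lt_of_grlexLT hgl
          exact absurd (hT0max T hT) (not_le_of_gt hlt)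
      rw [hz, smul_zero]
    · intro h
      exact absurd hT0mem h
  rw [hl, MvPolynomial.coeff_zero] at hcoeff
  exact Finsupp.mem_support_iff.1 hT0mem hcoeff.symm
end
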